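/- arXiv:2506.20218 — 6 statements merged into one kernel-verified Lean document; each statement's English description precedes it below -/
import Mathlib

section
/- Let m ≥ 1 be an integer and let q satisfy 1/2 < q < 1. Let Y1 ~ Binomial(m, q), Y2 = m − Y1, and M = max(Y1, Y2). Then for all integers i, i' with ⌈m/2⌉ ≤ i' ≤ i ≤ m: Pr(Y1 > Y2 | M = i) − Pr(Y2 > Y1 | M = i) ≥ Pr(Y1 > Y2 | M = i') − Pr(Y2 > Y1 | M = i'). -/
open scoped BigOperators

noncomputable section
attribute [local instance] Classical.propDecidable

/-- `binomPr m q S` is the probability that a `Binomial(m, q)` random variable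
takes a value in the set `S`. -/
def binomPr (m : ℕ) (q : ℝ) (S : Set ℕ) : ℝ :=
  ∑ i ∈ Finset.range (m + 1),
    S.indicator (fun i => (m.choose i : ℝ) * q ^ i * (1 - q) ^ (m - i)) i

lemma prod_le_aux (q : ℝ) (h1 : 0 ≤ 1 - q) (hle : 1 - q ≤ q) (e s : ℕ) :
    q ^ e * (1 - q) ^ (e + s) ≤ q ^ (e + s) * (1 - q) ^ e := by
  have h0 : 0 ≤ q := le_trans h1 hle
  rw [pow_add, pow_add]
  have h2 := pow_le_pow_left₀ h1 hle s
  have hnn : 0 ≤ q ^ e * (1 - q) ^ e := by positivity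
  nlinarith

lemma key_div (a b a' b' : ℝ) (ha : 0 < a) (hb : 0 < b) (ha' : 0 < a') (hb' : 0 < b')
    (h : a' * b ≤ a * b') :
    (a' - b') / (a' + b') ≤ (a - b) / (a + b) := by
  rw [div_le_div_iff₀ (by linarith) (by linarith)]
  nlinarith

lemma comp_pair (m : ℕ) (q : ℝ) (S : Set ℕ) (a b : ℕ) (hab : a ≠ b)
    (ha : a ∈ S) (hb : b ∈ S) (ham : a ≤ m) (hbm : b ≤ m)
    (hz : ∀ k, k ≤ m → k ≠ a → k ≠ b → k ∉ S) :
    binomPr m q S = (m.choose a : ℝ) * q ^ a * (1 - q) ^ (m - a)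
      + (m.choose b : ℝ) * q ^ b * (1 - q) ^ (m - b) := by
  rw [binomPr]
  rw [← Finset.sum_subset (s₁ := ({a, b} : Finset ℕ))
      (by intro x hx; simp only [Finset.mem_insert, Finset.mem_singleton] at hx
          rcases hx with rfl | rfl <;> simp [Finset.mem_range] <;> omega)
      (by intro x hx hnx
          simp only [Finset.mem_insert, Finset.mem_singleton, not_or] at hnx
          exact Set.indicator_of_notMem
            (hz x (by simpa [Finset.mem_range, Nat.lt_succ_iff] using hx) hnx.1 hnx.2) _)]
  rw [Finset.sum_pair hab, Set.indicator_of_mem ha, Set.indicator_of_mem hb]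

lemma comp_single (m : ℕ) (q : ℝ) (S : Set ℕ) (a : ℕ)
    (ha : a ∈ S) (ham : a ≤ m)
    (hz : ∀ k, k ≤ m → k ≠ a → k ∉ S) :
    binomPr m q S = (m.choose a : ℝ) * q ^ a * (1 - q) ^ (m - a) := by
  rw [binomPr]
  rw [← Finset.sum_subset (s₁ := ({a} : Finset ℕ))
      (by intro x hx; simp only [Finset.mem_singleton] at hx
          subst hx; simp [Finset.mem_range]; omega)
      (by intro x hx hnx
          simp only [Finset.mem_singleton] at hnx
          exact Set.indicator_of_notMem
            (hz x (by simpa [Finset.mem_range, Nat.lt_succ_iff] using hx) hnx) _)]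
  rw [Finset.sum_singleton, Set.indicator_of_mem ha]

lemma comp_empty (m : ℕ) (q : ℝ) (S : Set ℕ) (hz : ∀ k, k ∉ S) :
    binomPr m q S = 0 := by
  rw [binomPr]
  exact Finset.sum_eq_zero fun k _ => Set.indicator_of_notMem (hz k) _

lemma comp1 (m : ℕ) (q : ℝ) (i : ℕ) (h : m < 2 * i) (him : i ≤ m) :
    binomPr m q ({y | m - y < y} ∩ {y | max y (m - y) = i})
      = (m.choose i : ℝ) * q ^ i * (1 - q) ^ (m - i) := by
  refine comp_single m q _ i ⟨?_, ?_⟩ him ?_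
  · simp only [Set.mem_setOf_eq]; omega
  · simp only [Set.mem_setOf_eq]; omega
  · intro k hk hne
    simp only [Set.mem_inter_iff, Set.mem_setOf_eq, not_and]
    omega

lemma comp2 (m : ℕ) (q : ℝ) (i : ℕ) (h : m < 2 * i) (him : i ≤ m) :
    binomPr m q ({y | y < m - y} ∩ {y | max y (m - y) = i})
      = (m.choose i : ℝ) * q ^ (m - i) * (1 - q) ^ i := by
  have e1 : m - (m - i) = i := by omega
  have := comp_single m q ({y | y < m - y} ∩ {y | max y (m - y) = i}) (m - i)
    ⟨by simp only [Set.mem_setOf_eq]; omega, by simp only [Set.mem_setOf_eq]; omega⟩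
    (by omega)
    (by intro k hk hne
        simp only [Set.mem_inter_iff, Set.mem_setOf_eq, not_and]
        omega)
  rw [this, Nat.choose_symm him, e1]

lemma comp3 (m : ℕ) (q : ℝ) (i : ℕ) (h : m < 2 * i) (him : i ≤ m) :
    binomPr m q {y | max y (m - y) = i}
      = (m.choose i : ℝ) * q ^ i * (1 - q) ^ (m - i)
        + (m.choose i : ℝ) * q ^ (m - i) * (1 - q) ^ i := by
  have e1 : m - (m - i) = i := by omega
  have := comp_pair m q {y | max y (m - y) = i} i (m - i) (by omega)
    (by simp only [Set.mem_setOf_eq]; omega)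
    (by simp only [Set.mem_setOf_eq]; omega)
    him (by omega)
    (by intro k hk h1 h2
        simp only [Set.mem_setOf_eq]
        omega)
  rw [this, Nat.choose_symm him, e1]

lemma comp1_zero (m : ℕ) (q : ℝ) (i : ℕ) (h : m = 2 * i) :
    binomPr m q ({y | m - y < y} ∩ {y | max y (m - y) = i}) = 0 := by
  refine comp_empty m q _ fun k => ?_
  simp only [Set.mem_inter_iff, Set.mem_setOf_eq, not_and]
  omega

lemma comp2_zero (m : ℕ) (q : ℝ) (i : ℕ) (h : m = 2 * i) :
    binomPr m q ({y | y < m - y} ∩ {y | max y (m - y) = i}) = 0 := by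
  refine comp_empty m q _ fun k => ?_
  simp only [Set.mem_inter_iff, Set.mem_setOf_eq, not_and]
  omega

/-- monotonicity of the conditional bias given `M = i`, where
`Y1 ~ Binomial(m, q)`, `Y2 = m - Y1`, `M = max(Y1, Y2)`, and
`⌈m/2⌉ ≤ i' ≤ i ≤ m` (note `⌈m/2⌉ ≤ i'` iff `m ≤ 2 * i'`). -/
theorem conditional_bias_monotone_eq
    (m : ℕ) (hm : 1 ≤ m) (q : ℝ) (hq : 1 / 2 < q) (hq1 : q < 1)
    (i i' : ℕ) (hi' : m ≤ 2 * i') (hii : i' ≤ i) (him : i ≤ m) :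
    binomPr m q ({y | m - y < y} ∩ {y | max y (m - y) = i'}) /
          binomPr m q {y | max y (m - y) = i'} -
        binomPr m q ({y | y < m - y} ∩ {y | max y (m - y) = i'}) /
          binomPr m q {y | max y (m - y) = i'} ≤
      binomPr m q ({y | m - y < y} ∩ {y | max y (m - y) = i}) /
          binomPr m q {y | max y (m - y) = i} -
        binomPr m q ({y | y < m - y} ∩ {y | max y (m - y) = i}) /
          binomPr m q {y | max y (m - y) = i} := by
  have h0q : 0 < q := by linarith
  have h01 : 0 < 1 - q := by linarith
  have hle : 1 - q ≤ q := by linarith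
  have him' : i' ≤ m := le_trans hii him
  rcases eq_or_ne i i' with rfl | hne
  · exact le_refl _
  have hmi : m < 2 * i := by omega
  have hc : (0 : ℝ) < (m.choose i : ℝ) := by
    exact_mod_cast Nat.choose_pos him
  have ha : (0 : ℝ) < (m.choose i : ℝ) * q ^ i * (1 - q) ^ (m - i) := by positivity
  have hb : (0 : ℝ) < (m.choose i : ℝ) * q ^ (m - i) * (1 - q) ^ i := by positivity
  -- f (m-i) ≤ f i
  have hba : (m.choose i : ℝ) * q ^ (m - i) * (1 - q) ^ i
      ≤ (m.choose i : ℝ) * q ^ i * (1 - q) ^ (m - i) := by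
    have base := prod_le_aux q h01.le hle (m - i) (2 * i - m)
    have e1 : (m - i) + (2 * i - m) = i := by omega
    rw [e1] at base
    nlinarith
  rw [comp1 m q i hmi him, comp2 m q i hmi him, comp3 m q i hmi him]
  rcases eq_or_lt_of_le hi' with heq | hmi'
  · -- m = 2 * i' case: LHS = 0
    rw [comp1_zero m q i' heq, comp2_zero m q i' heq]
    simp only [zero_div, sub_zero, sub_self]
    rw [sub_nonneg, div_le_div_iff₀ (by linarith) (by linarith)]
    nlinarith
  · rw [comp1 m q i' hmi' him', comp2 m q i' hmi' him', comp3 m q i' hmi' him']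
    have hc' : (0 : ℝ) < (m.choose i' : ℝ) := by
      exact_mod_cast Nat.choose_pos him'
    have ha' : (0 : ℝ) < (m.choose i' : ℝ) * q ^ i' * (1 - q) ^ (m - i') := by positivity
    have hb' : (0 : ℝ) < (m.choose i' : ℝ) * q ^ (m - i') * (1 - q) ^ i' := by positivity
    rw [div_sub_div_same, div_sub_div_same]
    refine key_div _ _ _ _ ha hb ha' hb' ?_
    have key2 : q ^ i' * (1 - q) ^ (m - i') * (q ^ (m - i) * (1 - q) ^ i)
        ≤ q ^ i * (1 - q) ^ (m - i) * (q ^ (m - i') * (1 - q) ^ i') := by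
      have base := prod_le_aux q h01.le hle (i' + (m - i)) (2 * (i - i'))
      have e1 : i' + (m - i) + 2 * (i - i') = i + (m - i') := by omega
      rw [e1] at base
      calc q ^ i' * (1 - q) ^ (m - i') * (q ^ (m - i) * (1 - q) ^ i)
          = q ^ (i' + (m - i)) * (1 - q) ^ (i + (m - i')) := by
            rw [pow_add, pow_add]; ring
        _ ≤ q ^ (i + (m - i')) * (1 - q) ^ (i' + (m - i)) := base
        _ = q ^ i * (1 - q) ^ (m - i) * (q ^ (m - i') * (1 - q) ^ i') := by
            rw [pow_add, pow_add]; ring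
    nlinarith [mul_le_mul_of_nonneg_left key2 (le_of_lt (mul_pos hc hc'))]
end
end

section
/- Let m ≥ 1 be an integer and let q satisfy 1/2 < q < 1. Let Y1 ~ Binomial(m, q), Y2 = m − Y1, and M = max(Y1, Y2). Then for all integers i, i' with m/2 ≤ i' ≤ i ≤ m: Pr(Y1 > Y2 | M ≥ i) − Pr(Y2 > Y1 | M ≥ i) ≥ Pr(Y1 > Y2 | M ≥ i') − Pr(Y2 > Y1 | M ≥ i'). -/
open scoped BigOperators

noncomputable section

def binomP (m : ℕ) (q : ℝ) (y : ℕ) : ℝ := (m.choose y : ℝ) * q ^ y * (1 - q) ^ (m - y)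

lemma binomP_pos (m : ℕ) (q : ℝ) (hq0 : 0 < q) (hq1 : q < 1) (y : ℕ) (hy : y ≤ m) :
    0 < binomP m q y := by
  have h1 : (0:ℝ) < 1 - q := by linarith
  have hc : 0 < (m.choose y : ℝ) := by exact_mod_cast Nat.choose_pos hy
  unfold binomP
  positivity

lemma binomP_nonneg (m : ℕ) (q : ℝ) (hq0 : 0 < q) (hq1 : q < 1) (y : ℕ) :
    0 ≤ binomP m q y := by
  have h1 : (0:ℝ) < 1 - q := by linarith
  have hc : (0:ℝ) ≤ (m.choose y : ℝ) := by positivity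
  unfold binomP; positivity

lemma binomP_flip (m : ℕ) (q : ℝ) (h1 : 0 < 1 - q) (y : ℕ) (hy : y ≤ m) (h2 : m ≤ 2*y) :
    binomP m q y = binomP m q (m - y) * (q / (1 - q)) ^ (2*y - m) := by
  unfold binomP
  rw [Nat.choose_symm hy]
  have e1 : m - (m - y) = y := by omega
  rw [e1, div_pow]
  rw [show q ^ y = q ^ (m-y) * q ^ (2*y-m) by rw [← pow_add]; congr 1; omega]
  rw [show (1-q) ^ y = (1-q) ^ (m-y) * (1-q) ^ (2*y-m) by rw [← pow_add]; congr 1; omega]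
  have hne : (1-q) ^ (2*y-m) ≠ 0 := pow_ne_zero _ h1.ne'
  field_simp

lemma binomPr_eq_sum (m : ℕ) (q : ℝ) (S : Set ℕ) (P : ℕ → Prop) [DecidablePred P]
    (h : ∀ y, y ≤ m → (y ∈ S ↔ P y)) :
    binomPr m q S = ∑ y ∈ Finset.range (m+1), if P y then binomP m q y else 0 := by
  classical
  unfold binomPr binomP
  refine Finset.sum_congr rfl fun y hy => ?_
  rw [Finset.mem_range, Nat.lt_succ_iff] at hy
  rw [Set.indicator_apply]
  by_cases hP : P y
  · rw [if_pos hP, if_pos ((h y hy).mpr hP)]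
  · rw [if_neg hP, if_neg (fun hmem => hP ((h y hy).mp hmem))]

lemma sum_reindex (m j : ℕ) (f : ℕ → ℝ) :
    (∑ y ∈ Finset.range (m+1), if 2*y < m ∧ j + y ≤ m then f y else 0)
    = ∑ y ∈ Finset.range (m+1), if m < 2*y ∧ j ≤ y then f (m - y) else 0 := by
  refine Finset.sum_nbij' (fun y => m - y) (fun y => m - y) ?_ ?_ ?_ ?_ ?_
  · intro a ha; simp only [Finset.mem_range] at *; omega
  · intro a ha; simp only [Finset.mem_range] at *; omega
  · intro a ha; simp only [Finset.mem_range] at ha; omega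
  · intro a ha; simp only [Finset.mem_range] at ha; omega
  · intro a ha
    simp only [Finset.mem_range] at ha
    split_ifs with h1 h2 h2
    · congr 1; omega
    · exfalso; omega
    · exfalso; omega
    · rfl

lemma sum_split (m j : ℕ) (hj : m ≤ 2*j) (hjm : j ≤ m) (f : ℕ → ℝ) :
    (∑ y ∈ Finset.range (m+1), if j ≤ y ∨ j + y ≤ m then f y else 0)
    = (∑ y ∈ Finset.range (m+1), if m < 2*y ∧ j ≤ y then f y else 0)
    + (∑ y ∈ Finset.range (m+1), if 2*y < m ∧ j + y ≤ m then f y else 0)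
    + (if 2*j = m then f j else 0) := by
  have ht : (if 2*j = m then f j else 0)
      = ∑ y ∈ Finset.range (m+1), if 2*j = m ∧ y = j then f y else 0 := by
    by_cases h : 2*j = m
    · rw [Finset.sum_eq_single_of_mem j (by simp only [Finset.mem_range]; omega)]
      · simp [h]
      · intro y _ hyj; simp [hyj]
    · simp [h]
  rw [ht, ← Finset.sum_add_distrib, ← Finset.sum_add_distrib]
  refine Finset.sum_congr rfl fun y hy => ?_
  rw [Finset.mem_range, Nat.lt_succ_iff] at hy
  split_ifs with h1 h2 h3 h4 <;>
    first
      | ring1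
      | (exfalso; omega)
      | (obtain ⟨-, rfl⟩ : 2*j = m ∧ y = j := by assumption; ring)

lemma sum_split2 (m i i' : ℕ) (h : i' ≤ i) (f : ℕ → ℝ) :
    (∑ y ∈ Finset.range (m+1), if m < 2*y ∧ i' ≤ y then f y else 0)
    = (∑ y ∈ Finset.range (m+1), if m < 2*y ∧ i ≤ y then f y else 0)
    + (∑ y ∈ Finset.range (m+1), if m < 2*y ∧ i' ≤ y ∧ y < i then f y else 0) := by
  rw [← Finset.sum_add_distrib]
  refine Finset.sum_congr rfl fun y _ => ?_
  split_ifs <;> first | ring1 | (exfalso; omega)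


/-- monotonicity of the conditional bias given `M ≥ i`, where
`Y1 ~ Binomial(m, q)`, `Y2 = m - Y1`, `M = max(Y1, Y2)`, and
`m/2 ≤ i' ≤ i ≤ m` (note `m/2 ≤ i'` iff `m ≤ 2 * i'`). -/
theorem conditional_bias_monotone_ge
    (m : ℕ) (hm : 1 ≤ m) (q : ℝ) (hq : 1 / 2 < q) (hq1 : q < 1)
    (i i' : ℕ) (hi' : m ≤ 2 * i') (hii : i' ≤ i) (him : i ≤ m) :
    binomPr m q ({y | m - y < y} ∩ {y | i' ≤ max y (m - y)}) /
          binomPr m q {y | i' ≤ max y (m - y)} -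
        binomPr m q ({y | y < m - y} ∩ {y | i' ≤ max y (m - y)}) /
          binomPr m q {y | i' ≤ max y (m - y)} ≤
      binomPr m q ({y | m - y < y} ∩ {y | i ≤ max y (m - y)}) /
          binomPr m q {y | i ≤ max y (m - y)} -
        binomPr m q ({y | y < m - y} ∩ {y | i ≤ max y (m - y)}) /
          binomPr m q {y | i ≤ max y (m - y)} := by
  classical
  rcases eq_or_lt_of_le hii with rfl | hlt
  · exact le_refl _
  have hq0 : 0 < q := by linarith
  have h1 : (0:ℝ) < 1 - q := by linarith
  have hi'm : i' ≤ m := le_trans hii him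
  have hi2 : m < 2 * i := by omega
  set p : ℕ → ℝ := binomP m q with hpdef
  set r : ℝ := q / (1 - q) with hrdef
  have hr1 : 1 ≤ r := by
    rw [hrdef, le_div_iff₀ h1]; linarith
  have hr0 : 0 ≤ r := le_trans zero_le_one hr1
  -- abbreviations
  set A : ℕ → ℝ := fun j => ∑ y ∈ Finset.range (m+1), if m < 2*y ∧ j ≤ y then p y else 0 with hA
  set B : ℕ → ℝ := fun j => ∑ y ∈ Finset.range (m+1), if m < 2*y ∧ j ≤ y then p (m - y) else 0 with hB
  set C : ℝ := ∑ y ∈ Finset.range (m+1), if m < 2*y ∧ i' ≤ y ∧ y < i then p y else 0 with hC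
  set D : ℝ := ∑ y ∈ Finset.range (m+1), if m < 2*y ∧ i' ≤ y ∧ y < i then p (m - y) else 0 with hD
  set T : ℕ → ℝ := fun j => if 2*j = m then p j else 0 with hT
  -- conversions of binomPr
  have hconv1 : ∀ j, m ≤ 2*j →
      binomPr m q ({y | m - y < y} ∩ {y | j ≤ max y (m - y)}) = A j := by
    intro j hj
    apply binomPr_eq_sum
    intro y hy
    simp only [Set.mem_inter_iff, Set.mem_setOf_eq, le_max_iff]
    omega
  have hconv2 : ∀ j, m ≤ 2*j →
      binomPr m q ({y | y < m - y} ∩ {y | j ≤ max y (m - y)}) = B j := by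
    intro j hj
    have : binomPr m q ({y | y < m - y} ∩ {y | j ≤ max y (m - y)})
        = ∑ y ∈ Finset.range (m+1), if 2*y < m ∧ j + y ≤ m then p y else 0 := by
      apply binomPr_eq_sum
      intro y hy
      simp only [Set.mem_inter_iff, Set.mem_setOf_eq, le_max_iff]
      omega
    rw [this, sum_reindex]
  have hconv3 : ∀ j, m ≤ 2*j → j ≤ m →
      binomPr m q {y | j ≤ max y (m - y)} = A j + B j + T j := by
    intro j hj hjm
    have : binomPr m q {y | j ≤ max y (m - y)}
        = ∑ y ∈ Finset.range (m+1), if j ≤ y ∨ j + y ≤ m then p y else 0 := by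
      apply binomPr_eq_sum
      intro y hy
      simp only [Set.mem_setOf_eq, le_max_iff]
      omega
    rw [this, sum_split m j hj hjm, sum_reindex]
  rw [hconv1 i (by omega), hconv1 i' hi', hconv2 i (by omega), hconv2 i' hi',
    hconv3 i (by omega) him, hconv3 i' hi' hi'm]
  -- splits
  have hsplitA : A i' = A i + C := sum_split2 m i i' hii _
  have hsplitB : B i' = B i + D := sum_split2 m i i' hii _
  -- positivity facts
  have hpnn : ∀ y, 0 ≤ p y := fun y => binomP_nonneg m q hq0 hq1 y
  have hBnn : ∀ j, 0 ≤ B j := by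
    intro j
    apply Finset.sum_nonneg
    intro y _
    split_ifs
    · exact hpnn _
    · exact le_rfl
  have hDnn : 0 ≤ D := by
    apply Finset.sum_nonneg
    intro y _
    split_ifs
    · exact hpnn _
    · exact le_rfl
  have hTnn : ∀ j, 0 ≤ T j := by
    intro j
    simp only [hT]
    split_ifs
    · exact hpnn _
    · exact le_rfl
  have hApos : ∀ j, j ≤ m → 0 < A j := by
    intro j hjm
    apply Finset.sum_pos' (fun y _ => by split_ifs; exacts [hpnn _, le_refl 0])
    refine ⟨m, Finset.mem_range.mpr (by omega), ?_⟩
    rw [if_pos ⟨by omega, hjm⟩]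
    exact binomP_pos m q hq0 hq1 m le_rfl
  -- key termwise comparisons
  have hflip : ∀ y, y ≤ m → m < 2*y → p y = p (m - y) * r ^ (2*y - m) :=
    fun y hy h2 => binomP_flip m q h1 y hy (by omega)
  have hAB : ∀ j, m ≤ 2*j → r ^ (2*j - m) * B j ≤ A j := by
    intro j hj
    rw [hA, hB, Finset.mul_sum]
    apply Finset.sum_le_sum
    intro y hy
    rw [Finset.mem_range, Nat.lt_succ_iff] at hy
    split_ifs with h
    · rw [hflip y hy h.1]
      rw [mul_comm]
      apply mul_le_mul_of_nonneg_left _ (hpnn _)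
      exact pow_le_pow_right₀ hr1 (by omega)
    · simp
  have hCD : C ≤ r ^ (2*i - m) * D := by
    rw [hC, hD, Finset.mul_sum]
    apply Finset.sum_le_sum
    intro y hy
    rw [Finset.mem_range, Nat.lt_succ_iff] at hy
    split_ifs with h
    · rw [hflip y hy h.1]
      rw [mul_comm (p (m-y))]
      apply mul_le_mul_of_nonneg_right _ (hpnn _)
      exact pow_le_pow_right₀ hr1 (by omega)
    · simp
  have hBA : ∀ j, m ≤ 2*j → B j ≤ A j := by
    intro j hj
    refine le_trans ?_ (hAB j hj)
    nth_rewrite 1 [← one_mul (B j)]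
    apply mul_le_mul_of_nonneg_right _ (hBnn j)
    exact one_le_pow₀ hr1
  -- cross inequality A i' * B i ≤ A i * B i'
  have hcross : A i' * B i ≤ A i * B i' := by
    rw [hsplitA, hsplitB]
    have h1' : C * B i ≤ (r ^ (2*i - m) * D) * B i :=
      mul_le_mul_of_nonneg_right hCD (hBnn i)
    have h2' : (r ^ (2*i - m) * B i) * D ≤ A i * D :=
      mul_le_mul_of_nonneg_right (hAB i (by omega)) hDnn
    nlinarith [hBnn i, hDnn]
  -- T i = 0
  have hTi : T i = 0 := by simp only [hT]; rw [if_neg (by omega)]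
  rw [hTi, add_zero]
  have hABpos : 0 < A i + B i := by
    have := hApos i him; have := hBnn i; linarith
  have hABpos' : 0 < A i' + B i' := by
    have := hApos i' hi'm; have := hBnn i'; linarith
  have hDenpos' : 0 < A i' + B i' + T i' := by
    have := hTnn i'; linarith
  have hnum' : 0 ≤ A i' - B i' := by
    have := hBA i' hi'; linarith
  calc A i' / (A i' + B i' + T i') - B i' / (A i' + B i' + T i')
      = (A i' - B i') / (A i' + B i' + T i') := by ring
    _ ≤ (A i' - B i') / (A i' + B i') := by
        apply div_le_div_of_nonneg_left hnum' hABpos'  -- may need arg tweak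
        · have := hTnn i'; linarith
    _ ≤ (A i - B i) / (A i + B i) := by
        rw [div_le_div_iff₀ hABpos' hABpos]
        nlinarith [hcross]
    _ = A i / (A i + B i) - B i / (A i + B i) := by ring

end
end

section
/- There exists a constant C1 > 0 such that for every integer m ≥ 1, every real q with 1/2 < q < 1, Y1 ~ Binomial(m, q), Y2 = m − Y1, and every integer x with m/2 ≤ x < m: Pr(Y1 > Y2 | max(Y1, Y2) > x) − Pr(Y2 > Y1 | max(Y1, Y2) > x) ≥ C1 · min(√m · (2q − 1), 1). -/
open scoped BigOperators

noncomputable section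

namespace CBR
open Finset

def bp (m : ℕ) (q : ℝ) (i : ℕ) : ℝ := (m.choose i : ℝ) * q ^ i * (1 - q) ^ (m - i)

lemma bp_nonneg {m : ℕ} {q : ℝ} (h0 : 0 ≤ q) (h1 : q ≤ 1) (i : ℕ) : 0 ≤ bp m q i := by
  have h2 : (0:ℝ) ≤ 1 - q := by linarith
  unfold bp; positivity

lemma sum_bp (m : ℕ) (q : ℝ) : ∑ i ∈ range (m + 1), bp m q i = 1 := by
  rw [show (1:ℝ) = (q + (1-q))^m by ring_nf, add_pow]
  exact Finset.sum_congr rfl fun i _ => by unfold bp; ring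

lemma bp_step {m i : ℕ} (q : ℝ) (hi : i < m) :
    (i + 1 : ℝ) * bp m q (i+1) * (1 - q) = ((m:ℝ) - i) * bp m q i * q := by
  have h2 := congrArg (Nat.cast : ℕ → ℝ) (Nat.choose_succ_right_eq m i)
  push_cast [Nat.cast_sub hi.le] at h2
  have hsub : m - (i+1) + 1 = m - i := by omega
  unfold bp
  rw [show m - i = (m - (i+1)) + 1 from hsub.symm]
  linear_combination (q^(i+1) * (1-q) * (1-q)^(m-(i+1))) * h2

lemma two_centralBinom_le : ∀ n : ℕ, 1 ≤ n → 2 * Nat.centralBinom n ≤ 4 ^ n := by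
  intro n
  induction n with
  | zero => omega
  | succ k ih =>
    intro _
    rcases Nat.eq_zero_or_pos k with hk | hk
    · subst hk; simp [Nat.centralBinom]
    · have h1 := Nat.succ_mul_centralBinom_succ k
      have h2 := ih hk
      have heq : (k+1) * (2 * Nat.centralBinom (k+1)) = 2*(2*(2*k+1)* Nat.centralBinom k) := by
        rw [← h1]; ring
      have h3 : (k+1) * (2 * Nat.centralBinom (k+1)) ≤ (k+1) * 4^(k+1) := by
        rw [heq]
        calc 2*(2*(2*k+1)* Nat.centralBinom k) ≤ 2*(2*(2*k+2)* Nat.centralBinom k) := by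
              apply Nat.mul_le_mul_left; apply Nat.mul_le_mul_right; omega
          _ = (k+1) * (4 * (2 * Nat.centralBinom k)) := by ring
          _ ≤ (k+1) * (4 * 4^k) := by
              apply Nat.mul_le_mul_left; exact Nat.mul_le_mul_left _ h2
          _ = (k+1) * 4^(k+1) := by ring
      exact Nat.le_of_mul_le_mul_left h3 (by omega)

lemma bp_reflect_le {m i : ℕ} {q : ℝ} (hq : 1/2 ≤ q) (hq1 : q ≤ 1) (hi : 2*i < m) :
    bp m q i ≤ bp m q (m - i) := by
  have hp0 : (0:ℝ) ≤ 1 - q := by linarith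
  have hpq : 1 - q ≤ q := by linarith
  have him : i ≤ m := by omega
  have hsymm : m.choose (m - i) = m.choose i := Nat.choose_symm him
  unfold bp
  rw [hsymm, show m - (m - i) = i by omega]
  have hd : m - i = i + (m - 2*i) := by omega
  rw [hd, pow_add, pow_add]
  have hple : (1-q)^(m-2*i) ≤ q^(m-2*i) := pow_le_pow_left₀ hp0 hpq _
  have h1 : (0:ℝ) ≤ (m.choose i : ℝ) * (q^i * (1-q)^i) := by positivity
  calc (m.choose i:ℝ) * q ^ i * ((1-q)^i * (1-q)^(m-2*i))
        = ((m.choose i:ℝ) * (q^i * (1-q)^i)) * (1-q)^(m-2*i) := by ring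
    _ ≤ ((m.choose i:ℝ) * (q^i * (1-q)^i)) * q^(m-2*i) := by
        exact mul_le_mul_of_nonneg_left hple h1
    _ = (m.choose i:ℝ) * (q ^ i * q^(m-2*i)) * (1-q)^i := by ring

lemma median_lb {m : ℕ} (hm : 1 ≤ m) {q : ℝ} (hq : 1/2 ≤ q) (hq1 : q ≤ 1) :
    (1/4 : ℝ) ≤ ∑ i ∈ Ico (m/2 + 1) (m+1), bp m q i := by
  have hrange : ∑ i ∈ range (m+1), bp m q i = 1 := sum_bp m q
  have hre : ∑ i ∈ range (m - (m/2)), bp m q i ≤ ∑ i ∈ Ico (m/2+1) (m+1), bp m q i := by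
    have step1 : ∑ i ∈ range (m - (m/2)), bp m q i ≤ ∑ i ∈ range (m - (m/2)), bp m q (m - i) := by
      apply Finset.sum_le_sum
      intro i hi
      simp only [mem_range] at hi
      exact bp_reflect_le hq hq1 (by omega)
    have step2 : ∑ i ∈ range (m - (m/2)), bp m q (m - i) = ∑ j ∈ Ico (m/2+1) (m+1), bp m q j := by
      apply Finset.sum_nbij' (fun i => m - i) (fun j => m - j)
      · intro i hi; simp only [mem_range] at hi; simp only [mem_Ico]; omega
      · intro j hj; simp only [mem_Ico] at hj; simp only [mem_range]; omega
      · intro i hi; simp only [mem_range] at hi; omega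
      · intro j hj; simp only [mem_Ico] at hj; omega
      · intro i hi; rfl
    linarith [step1, step2.le, step2.ge]
  have hmid : ∑ i ∈ Ico (m - (m/2)) (m/2+1), bp m q i ≤ 1/2 := by
    rcases Nat.even_or_odd m with he | ho
    · obtain ⟨k, hk⟩ := he
      have hmh : m - (m/2) = (m/2) := by omega
      have hIco : Ico (m-m/2) (m/2+1) = {m/2} := by rw [hmh]; exact Nat.Ico_succ_singleton _
      rw [hIco, Finset.sum_singleton]
      have hn1 : 1 ≤ (m/2) := by omega
      have hcb : (m.choose (m/2) : ℝ) ≤ 4^(m/2) / 2 := by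
        have h2c := two_centralBinom_le (m/2) hn1
        have hc : m.choose (m/2) = Nat.centralBinom (m/2) := by
          rw [Nat.centralBinom]; congr 1; omega
        rw [hc]
        have hcast : (2 * Nat.centralBinom (m/2) : ℝ) ≤ ((4^(m/2) : ℕ) : ℝ) := by exact_mod_cast h2c
        push_cast at hcast ⊢
        linarith
      have hqp : q * (1-q) ≤ 1/4 := by nlinarith
      have hqp0 : 0 ≤ q * (1-q) := by nlinarith
      unfold bp
      rw [show m - (m/2) = (m/2) by omega]
      calc (m.choose (m/2):ℝ) * q^(m/2) * (1-q)^(m/2) = (m.choose (m/2):ℝ) * (q*(1-q))^(m/2) := by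
            rw [mul_pow]; ring
        _ ≤ (4^(m/2)/2) * (1/4:ℝ)^(m/2) := by
            apply mul_le_mul hcb (pow_le_pow_left₀ hqp0 hqp (m/2)) (by positivity) (by positivity)
        _ = 1/2 := by rw [div_mul_eq_mul_div, ← mul_pow]; norm_num
    · obtain ⟨k, hk⟩ := ho
      have hmh : m - (m/2) = (m/2) + 1 := by omega
      rw [hmh, Finset.Ico_self, Finset.sum_empty]; norm_num
  have hsplit1 : ∑ i ∈ range (m - (m/2)), bp m q i + ∑ i ∈ Ico (m-m/2) (m+1), bp m q i = 1 := by
    rw [← hrange, range_eq_Ico, range_eq_Ico]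
    exact Finset.sum_Ico_consecutive (bp m q) (by omega : 0 ≤ m - m/2) (by omega : m - m/2 ≤ m+1)
  have hsplit2 : ∑ i ∈ Ico (m-m/2) (m/2+1), bp m q i + ∑ i ∈ Ico (m/2+1) (m+1), bp m q i
      = ∑ i ∈ Ico (m-m/2) (m+1), bp m q i :=
    Finset.sum_Ico_consecutive _ (by omega) (by omega)
  linarith

lemma step_lb {m i : ℕ} {q δ : ℝ} (hq : 1/2 ≤ q) (hq1 : q < 1)
    (hkey : (2*(i:ℝ)+1) - m ≤ δ * (i+1)) (him : i < m) :
    (1 - δ) * bp m q i ≤ bp m q (i+1) := by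
  have hb := bp_nonneg (by linarith) hq1.le (m := m) i
  have hid := bp_step q him
  have hA : (1-δ) * ((i:ℝ)+1) ≤ (m:ℝ) - i := by nlinarith
  have himr : (0:ℝ) ≤ (m:ℝ) - i := by
    have : (i:ℝ) ≤ m := by exact_mod_cast him.le
    linarith
  have hcoeff : (1-δ) * (((i:ℝ)+1) * (1-q)) ≤ ((m:ℝ) - i) * q := by nlinarith
  have h2 : (1-δ) * bp m q i * (((i:ℝ)+1) * (1-q)) ≤ bp m q (i+1) * (((i:ℝ)+1) * (1-q)) := by
    have hr : bp m q (i+1) * (((i:ℝ)+1) * (1-q)) = ((m:ℝ) - i) * bp m q i * q := by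
      rw [← hid]; ring
    rw [hr]
    calc (1-δ) * bp m q i * (((i:ℝ)+1) * (1-q))
        = ((1-δ) * (((i:ℝ)+1) * (1-q))) * bp m q i := by ring
      _ ≤ (((m:ℝ) - i) * q) * bp m q i := mul_le_mul_of_nonneg_right hcoeff hb
      _ = ((m:ℝ) - i) * bp m q i * q := by ring
  have hpos : (0:ℝ) < ((i:ℝ)+1) * (1-q) := by
    have : (0:ℝ) < 1 - q := by linarith
    positivity
  exact le_of_mul_le_mul_right h2 hpos

lemma pow_step {m : ℕ} {q δ : ℝ} (hq : 1/2 ≤ q) (hq1 : q < 1) (hδ0 : 0 ≤ δ) (hδ1 : δ ≤ 1)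
    (N : ℕ) (hN : ∀ j : ℕ, j < N → ((2*(j:ℝ)+1) - m ≤ δ * (j+1) ∧ j < m)) :
    ∀ k i, i + k ≤ N → (1-δ)^k * bp m q i ≤ bp m q (i+k) := by
  intro k
  induction k with
  | zero => intro i _; simp
  | succ n ih =>
    intro i hik
    have h1 := ih i (by omega)
    have hj := hN (i+n) (by omega)
    have h2 := step_lb hq hq1 (by exact_mod_cast hj.1) hj.2
    calc (1-δ)^(n+1) * bp m q i = (1-δ) * ((1-δ)^n * bp m q i) := by ring
      _ ≤ (1-δ) * bp m q (i+n) := mul_le_mul_of_nonneg_left h1 (by linarith)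
      _ ≤ bp m q (i+n+1) := h2
      _ = bp m q (i+(n+1)) := by ring_nf

/-- Absolute lower bound on the tail beyond roughly `m/2 + sqrt m / 8`. -/
lemma tail_lb {m : ℕ} (hm : 1 ≤ m) {q : ℝ} (hq : 1/2 ≤ q) (hq1 : q < 1) :
    ((1:ℝ)/2)^4096 ≤ ∑ i ∈ Ico (min (m/2 + (Nat.sqrt m/8+1) + 1) m) (m+1), bp m q i := by
  obtain ⟨w, hw⟩ : ∃ w, w = Nat.sqrt m / 8 + 1 := ⟨_, rfl⟩
  rw [← hw]
  rcases le_or_gt m 4096 with hsmall | hbig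
  · have hmem : m ∈ Ico (min (m/2 + w + 1) m) (m+1) := by
      simp only [mem_Ico]; omega
    have h1 : bp m q m ≤ ∑ i ∈ Ico (min (m/2 + w + 1) m) (m+1), bp m q i :=
      Finset.single_le_sum (fun i _ => bp_nonneg (by linarith) hq1.le i) hmem
    have h2 : bp m q m = q^m := by
      unfold bp; simp
    have h3 : ((1:ℝ)/2)^4096 ≤ ((1:ℝ)/2)^m :=
      pow_le_pow_of_le_one (by norm_num) (by norm_num) hsmall
    have h4 : ((1:ℝ)/2)^m ≤ q^m := pow_le_pow_left₀ (by norm_num) hq m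
    linarith
  · have hn2 : Nat.sqrt m * Nat.sqrt m ≤ m := Nat.sqrt_le m
    have hn64 : 64 ≤ Nat.sqrt m := by
      rw [Nat.le_sqrt]; omega
    have h64n : 64 * Nat.sqrt m ≤ m := le_trans (Nat.mul_le_mul_right _ hn64) hn2
    have hwn : 8 * w ≤ Nat.sqrt m + 8 := by omega
    have hs0m : m/2 + w + 1 ≤ m := by omega
    have hmin : min (m/2 + w + 1) m = m/2 + w + 1 := min_eq_left hs0m
    rw [hmin]
    have hh2w : m/2 + 2*w + 1 ≤ m := by omega
    set δ : ℝ := (8*(w:ℝ)+2)/m with hδ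
    have hm0 : (0:ℝ) < m := by exact_mod_cast (by omega : 0 < m)
    have hδ0 : 0 ≤ δ := by positivity
    have hδ1 : δ ≤ 1 := by
      rw [hδ, div_le_one hm0]
      have : 8*w + 2 ≤ m := by omega
      exact_mod_cast this
    have hwδnat : 2 * (w * (8*w+2)) ≤ m := by
      have hww : (8*w)*(8*w) ≤ (Nat.sqrt m + 8)*(Nat.sqrt m + 8) := Nat.mul_le_mul hwn hwn
      have h64 : 64 * Nat.sqrt m ≤ Nat.sqrt m * Nat.sqrt m := Nat.mul_le_mul_right _ hn64
      nlinarith [hn2, hn64, hwn, hww, h64]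
    have hwδ : (w:ℝ) * δ ≤ 1/2 := by
      rw [hδ, mul_div_assoc']
      rw [div_le_iff₀ hm0]
      have hcast : ((2:ℝ)) * (w * (8*w+2)) ≤ m := by exact_mod_cast hwδnat
      push_cast at hcast ⊢
      linarith
    have hbern : (1/2 : ℝ) ≤ (1-δ)^w := by
      have h := one_add_mul_le_pow (a := -δ) (by linarith) w
      have h' : (1:ℝ) + w * (-δ) ≤ (1-δ)^w := by
        rw [sub_eq_add_neg]; exact h
      linarith
    have hNprf : ∀ j : ℕ, j < m/2 + 2*w + 1 → ((2*(j:ℝ)+1) - m ≤ δ * (j+1) ∧ j < m) := by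
      intro j hj
      constructor
      · rcases le_or_gt (m/2) j with hj2 | hj2
        · have hub : (2*(j:ℝ)+1) - m ≤ 4*(w:ℝ)+1 := by
            have h1 : 2*j + 1 ≤ m + (4*w+1) := by omega
            have h2 := (Nat.cast_le (α := ℝ)).2 h1
            push_cast at h2; linarith
          have hlb : (4*(w:ℝ)+1) ≤ δ * (j+1) := by
            rw [hδ, div_mul_eq_mul_div, le_div_iff₀ hm0]
            have h2j : (m:ℝ) ≤ 2*(j:ℝ)+2 := by
              have : m ≤ 2*j + 2 := by omega
              exact_mod_cast this
            nlinarith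
          linarith
        · have h0 : (2*(j:ℝ)+1) - m ≤ 0 := by
            have h1 : 2*j + 1 ≤ m := by omega
            have h2 := (Nat.cast_le (α := ℝ)).2 h1
            push_cast at h2; linarith
          have : (0:ℝ) ≤ δ * (j+1) := by positivity
          linarith
      · omega
    have hterm : ∀ i ∈ Ico (m/2+1) (m/2+w+1), bp m q i ≤ 2 * bp m q (i+w) := by
      intro i hi
      simp only [mem_Ico] at hi
      have hps := pow_step hq hq1 hδ0 hδ1 (m/2 + 2*w + 1) hNprf w i (by omega)
      have hb := bp_nonneg (by linarith) hq1.le (m := m) i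
      nlinarith [hps]
    have hstrip : ∑ i ∈ Ico (m/2+1) (m/2+w+1), bp m q i
        ≤ 2 * ∑ i ∈ Ico (m/2+w+1) (m+1), bp m q i := by
      calc ∑ i ∈ Ico (m/2+1) (m/2+w+1), bp m q i
          ≤ ∑ i ∈ Ico (m/2+1) (m/2+w+1), 2 * bp m q (i+w) := Finset.sum_le_sum hterm
        _ = 2 * ∑ i ∈ Ico (m/2+1) (m/2+w+1), bp m q (w+i) := by
            rw [Finset.mul_sum]; exact Finset.sum_congr rfl fun i _ => by rw [Nat.add_comm i w]
        _ = 2 * ∑ i ∈ Ico (m/2+1+w) (m/2+w+1+w), bp m q i := by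
            rw [Finset.sum_Ico_add (bp m q) (m/2+1) (m/2+w+1) w]
        _ ≤ 2 * ∑ i ∈ Ico (m/2+w+1) (m+1), bp m q i := by
            apply mul_le_mul_of_nonneg_left _ (by norm_num)
            apply Finset.sum_le_sum_of_subset_of_nonneg
            · apply Finset.Ico_subset_Ico <;> omega
            · intro i _ _; exact bp_nonneg (by linarith) hq1.le i
    have hsplit : ∑ i ∈ Ico (m/2+1) (m/2+w+1), bp m q i
        + ∑ i ∈ Ico (m/2+w+1) (m+1), bp m q i = ∑ i ∈ Ico (m/2+1) (m+1), bp m q i :=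
      Finset.sum_Ico_consecutive _ (by omega) (by omega)
    have hmed := median_lb hm hq hq1.le
    have htail : (1/12 : ℝ) ≤ ∑ i ∈ Ico (m/2+w+1) (m+1), bp m q i := by linarith
    calc ((1:ℝ)/2)^4096 ≤ 1/12 := by
          calc ((1:ℝ)/2)^4096 ≤ ((1:ℝ)/2)^4 :=
                pow_le_pow_of_le_one (by norm_num) (by norm_num) (by norm_num)
            _ ≤ 1/12 := by norm_num
      _ ≤ _ := htail

lemma exp_neg_one_le_half : Real.exp (-1) ≤ 1/2 := by
  have h2 : (2:ℝ) ≤ Real.exp 1 := by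
    have := Real.add_one_le_exp (1:ℝ)
    linarith
  have h3 := Real.exp_pos (-1)
  have h4 : Real.exp (-1) * Real.exp 1 = 1 := by
    rw [← Real.exp_add]; norm_num
  nlinarith

lemma min_half_le_one_sub_exp {u : ℝ} (hu : 0 ≤ u) : min u 1 / 2 ≤ 1 - Real.exp (-u) := by
  have he1 := exp_neg_one_le_half
  rcases le_total u 1 with h | h
  · rw [min_eq_left h]
    have hc := convexOn_exp.2 (Set.mem_univ (0:ℝ)) (Set.mem_univ (-1:ℝ))
      (by linarith : (0:ℝ) ≤ 1-u) hu (by ring)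
    simp only [smul_eq_mul, mul_zero, mul_neg, mul_one, zero_add, Real.exp_zero] at hc
    nlinarith [hc, he1, hu]
  · rw [min_eq_right h]
    have hle : Real.exp (-u) ≤ Real.exp (-1) := Real.exp_le_exp.mpr (by linarith)
    linarith

end CBR

set_option maxHeartbeats 2000000 in
open Finset CBR in
/-- conditional on `max(Y1, Y2) > x` with `m/2 ≤ x < m`, the bias
between `Y1 ~ Binomial(m, q)` and `Y2 = m - Y1` is at least
`C1 · min(√m · (2q - 1), 1)` (note `m/2 ≤ x` iff `m ≤ 2 * x`). -/
theorem conditional_bias_reduction_to_two_opinions :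
    ∃ C1 : ℝ, 0 < C1 ∧
      ∀ (m : ℕ), 1 ≤ m → ∀ (q : ℝ), 1 / 2 < q → q < 1 →
        ∀ (x : ℕ), m ≤ 2 * x → x < m →
          C1 * min (Real.sqrt m * (2 * q - 1)) 1 ≤
            binomPr m q ({y | m - y < y} ∩ {y | x < max y (m - y)}) /
                binomPr m q {y | x < max y (m - y)} -
              binomPr m q ({y | y < m - y} ∩ {y | x < max y (m - y)}) /
                binomPr m q {y | x < max y (m - y)} := by
  refine ⟨((1:ℝ)/2)^4096/16, by positivity, ?_⟩
  intro m hm q hq hq1 x hx2 hxm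
  have hq0 : (0:ℝ) < q := by linarith
  have hq0' : (0:ℝ) ≤ q := hq0.le
  have hp0 : (0:ℝ) < 1 - q := by linarith
  -- the three binomPr values
  have hEsum : binomPr m q {y | x < max y (m - y)}
      = (∑ i ∈ range (m+1), (if x < i then bp m q i else 0))
        + (∑ i ∈ range (m+1), (if i < m - x then bp m q i else 0)) := by
    unfold binomPr
    rw [← Finset.sum_add_distrib]
    apply Finset.sum_congr rfl
    intro i hi
    simp only [mem_range] at hi
    rw [Set.indicator_apply]
    by_cases hxi : x < i
    · rw [if_pos (by simp only [Set.mem_setOf_eq]; omega),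
        if_pos hxi, if_neg (by omega : ¬ i < m - x)]
      simp [bp]
    · by_cases hmx : i < m - x
      · rw [if_pos (by simp only [Set.mem_setOf_eq]; omega), if_neg hxi, if_pos hmx]
        simp [bp]
      · rw [if_neg (by simp only [Set.mem_setOf_eq]; omega), if_neg hxi, if_neg hmx]
        norm_num
  have hAsum : binomPr m q ({y | m - y < y} ∩ {y | x < max y (m - y)})
      = ∑ i ∈ range (m+1), (if x < i then bp m q i else 0) := by
    unfold binomPr
    apply Finset.sum_congr rfl
    intro i hi
    simp only [mem_range] at hi
    rw [Set.indicator_apply]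
    by_cases hxi : x < i
    · rw [if_pos (by simp only [Set.mem_inter_iff, Set.mem_setOf_eq]; omega), if_pos hxi]
      simp [bp]
    · rw [if_neg (by simp only [Set.mem_inter_iff, Set.mem_setOf_eq]; omega), if_neg hxi]
  have hBsum : binomPr m q ({y | y < m - y} ∩ {y | x < max y (m - y)})
      = ∑ i ∈ range (m+1), (if i < m - x then bp m q i else 0) := by
    unfold binomPr
    apply Finset.sum_congr rfl
    intro i hi
    simp only [mem_range] at hi
    rw [Set.indicator_apply]
    by_cases hmx : i < m - x
    · rw [if_pos (by simp only [Set.mem_inter_iff, Set.mem_setOf_eq]; omega), if_pos hmx]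
      simp [bp]
    · rw [if_neg (by simp only [Set.mem_inter_iff, Set.mem_setOf_eq]; omega), if_neg hmx]
  -- identify the two tail sums
  have hPAeq : ∑ i ∈ range (m+1), (if x < i then bp m q i else 0)
      = ∑ i ∈ Ico (x+1) (m+1), bp m q i := by
    rw [range_eq_Ico, ← Finset.sum_Ico_consecutive _ (by omega : 0 ≤ x+1) (by omega : x+1 ≤ m+1)]
    have hz : ∑ i ∈ Ico 0 (x+1), (if x < i then bp m q i else 0) = 0 := by
      apply Finset.sum_eq_zero
      intro i hi
      simp only [mem_Ico] at hi
      rw [if_neg (by omega)]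
    rw [hz, zero_add]
    apply Finset.sum_congr rfl
    intro i hi
    simp only [mem_Ico] at hi
    rw [if_pos (by omega)]
  have hPBeq : ∑ i ∈ range (m+1), (if i < m - x then bp m q i else 0)
      = ∑ i ∈ Ico (x+1) (m+1), (m.choose i : ℝ) * q^(m-i) * (1-q)^i := by
    rw [range_eq_Ico, ← Finset.sum_Ico_consecutive _ (by omega : 0 ≤ m - x) (by omega : m - x ≤ m+1)]
    have hz : ∑ i ∈ Ico (m-x) (m+1), (if i < m - x then bp m q i else 0) = 0 := by
      apply Finset.sum_eq_zero
      intro i hi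
      simp only [mem_Ico] at hi
      rw [if_neg (by omega)]
    rw [hz, add_zero]
    have h1 : ∑ i ∈ Ico 0 (m-x), (if i < m - x then bp m q i else 0)
        = ∑ i ∈ range (m-x), bp m q i := by
      rw [range_eq_Ico]
      apply Finset.sum_congr rfl
      intro i hi
      simp only [mem_Ico] at hi
      rw [if_pos (by omega)]
    rw [h1]
    apply Finset.sum_nbij' (fun i => m - i) (fun j => m - j)
    · intro i hi; simp only [mem_range] at hi; simp only [mem_Ico]; omega
    · intro j hj; simp only [mem_Ico] at hj; simp only [mem_range]; omega
    · intro i hi; simp only [mem_range] at hi; omega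
    · intro j hj; simp only [mem_Ico] at hj; omega
    · intro i hi
      simp only [mem_range] at hi
      unfold bp
      rw [Nat.choose_symm (by omega : i ≤ m), show m - (m - i) = i by omega]
  -- abbreviations
  set PA := ∑ i ∈ Ico (x+1) (m+1), bp m q i with hPA
  set PB := ∑ i ∈ Ico (x+1) (m+1), (m.choose i : ℝ) * q^(m-i) * (1-q)^i with hPB
  set ρ := (1-q)/q with hρ
  have hρ0 : 0 ≤ ρ := by positivity
  have hρ1 : ρ ≤ 1 := by
    rw [hρ, div_le_one hq0]; linarith
  -- termwise relation
  have hbr : ∀ i ∈ Ico (x+1) (m+1),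
      (m.choose i:ℝ) * q^(m-i) * (1-q)^i = bp m q i * ρ^(2*i-m) := by
    intro i hi
    simp only [mem_Ico] at hi
    have hqi : q^i = q^(m-i) * q^(2*i-m) := by
      rw [← pow_add]; congr 1; omega
    have hpi : (1-q)^i = (1-q)^(m-i) * (1-q)^(2*i-m) := by
      rw [← pow_add]; congr 1; omega
    rw [hρ, div_pow, ← mul_div_assoc, eq_div_iff (by positivity : (q:ℝ)^(2*i-m) ≠ 0)]
    unfold bp
    rw [hqi, hpi]
    ring
  have hbrle : ∀ i ∈ Ico (x+1) (m+1),
      (m.choose i:ℝ) * q^(m-i) * (1-q)^i ≤ bp m q i := by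
    intro i hi
    rw [hbr i hi]
    have hb := bp_nonneg hq0' hq1.le (m := m) i
    calc bp m q i * ρ^(2*i-m) ≤ bp m q i * 1 := by
          apply mul_le_mul_of_nonneg_left _ hb
          exact pow_le_one₀ hρ0 hρ1
      _ = bp m q i := by ring
  -- basic facts about PA, PB
  have hbp_nonneg : ∀ i, 0 ≤ bp m q i := bp_nonneg hq0' hq1.le
  have hPB0 : 0 ≤ PB := by
    rw [hPB]; apply Finset.sum_nonneg; intro i _; positivity
  have hPBA : PB ≤ PA := by
    rw [hPA, hPB]; exact Finset.sum_le_sum hbrle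
  have hPApos : 0 < PA := by
    have h1 : bp m q m ≤ PA := by
      rw [hPA]
      exact Finset.single_le_sum (fun i _ => hbp_nonneg i) (by simp only [mem_Ico]; omega)
    have h2 : bp m q m = q^m := by unfold bp; simp
    have : (0:ℝ) < q^m := by positivity
    linarith
  have hPA1 : PA ≤ 1 := by
    rw [hPA]
    calc ∑ i ∈ Ico (x+1) (m+1), bp m q i ≤ ∑ i ∈ range (m+1), bp m q i := by
          apply Finset.sum_le_sum_of_subset_of_nonneg
          · rw [range_eq_Ico]; apply Finset.Ico_subset_Ico <;> omega
          · intro i _ _; exact hbp_nonneg i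
      _ = 1 := sum_bp m q
  -- the threshold s and exponent t
  set s := max (x+1) (min (m/2 + (Nat.sqrt m/8+1) + 1) m) with hs
  have hsx : x+1 ≤ s := le_max_left _ _
  have hsm : s ≤ m := max_le (by omega) (min_le_right _ _)
  set t := 2*s - m with ht
  set Ts := ∑ i ∈ Ico s (m+1), bp m q i with hTs
  -- PA - PB ≥ (1 - ρ^t) * Ts
  have hdiff : (1 - ρ^t) * Ts ≤ PA - PB := by
    have hsub : PA - PB = ∑ i ∈ Ico (x+1) (m+1), (bp m q i - (m.choose i:ℝ) * q^(m-i) * (1-q)^i) := by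
      rw [hPA, hPB, Finset.sum_sub_distrib]
    rw [hsub, ← Finset.sum_Ico_consecutive _ hsx (by omega : s ≤ m+1)]
    have hpart1 : (0:ℝ) ≤ ∑ i ∈ Ico (x+1) s, (bp m q i - (m.choose i:ℝ) * q^(m-i) * (1-q)^i) := by
      apply Finset.sum_nonneg
      intro i hi
      simp only [mem_Ico] at hi
      have := hbrle i (by simp only [mem_Ico]; omega)
      linarith
    have hpart2 : (1 - ρ^t) * Ts ≤ ∑ i ∈ Ico s (m+1), (bp m q i - (m.choose i:ℝ) * q^(m-i) * (1-q)^i) := by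
      rw [hTs, Finset.mul_sum]
      apply Finset.sum_le_sum
      intro i hi
      simp only [mem_Ico] at hi
      have hmem : i ∈ Ico (x+1) (m+1) := by simp only [mem_Ico]; omega
      rw [hbr i hmem]
      have hpow : ρ^(2*i-m) ≤ ρ^t := by
        apply pow_le_pow_of_le_one hρ0 hρ1
        omega
      have hb := hbp_nonneg i
      nlinarith
    linarith
  -- Ts ≥ c0 * PA
  have hc0Ts : ((1:ℝ)/2)^4096 * PA ≤ Ts := by
    rcases le_or_gt (min (m/2 + (Nat.sqrt m/8+1) + 1) m) (x+1) with hcase | hcase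
    · have hseq : s = x+1 := by rw [hs, max_eq_left hcase]
      have hTsPA : Ts = PA := by rw [hTs, hseq, hPA]
      rw [hTsPA]
      have hle1 : ((1:ℝ)/2)^4096 ≤ 1 := pow_le_one₀ (by norm_num) (by norm_num)
      nlinarith [hPApos, hle1]
    · have hseq : s = min (m/2 + (Nat.sqrt m/8+1) + 1) m := by rw [hs, max_eq_right hcase.le]
      have htl := tail_lb hm hq.le hq1
      rw [← hseq] at htl
      rw [← hTs] at htl
      calc ((1:ℝ)/2)^4096 * PA ≤ ((1:ℝ)/2)^4096 * 1 := by
            apply mul_le_mul_of_nonneg_left hPA1 (by positivity)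
        _ = ((1:ℝ)/2)^4096 := by ring
        _ ≤ Ts := htl
  -- t ≥ sqrt m / 4
  have hsqrtm : Real.sqrt m ≤ (Nat.sqrt m : ℝ) + 1 := by
    have h2 : m ≤ (Nat.sqrt m + 1) * (Nat.sqrt m + 1) := (Nat.lt_succ_sqrt m).le
    have h3 := (Nat.cast_le (α := ℝ)).2 h2
    push_cast at h3
    have h1 : (m:ℝ) ≤ ((Nat.sqrt m : ℝ)+1)^2 := by nlinarith
    calc Real.sqrt m ≤ Real.sqrt (((Nat.sqrt m : ℝ)+1)^2) := Real.sqrt_le_sqrt h1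
      _ = (Nat.sqrt m : ℝ) + 1 := Real.sqrt_sq (by positivity)
  have hsqm : Real.sqrt m ≤ (m:ℝ) := by
    have h1 : (m:ℝ) ≤ (m:ℝ)^2 := by
      have : (1:ℝ) ≤ m := by exact_mod_cast hm
      nlinarith
    calc Real.sqrt m ≤ Real.sqrt ((m:ℝ)^2) := Real.sqrt_le_sqrt h1
      _ = m := Real.sqrt_sq (by positivity)
  have htlb : Real.sqrt m / 4 ≤ (t:ℝ) := by
    rcases le_or_gt m (m/2 + (Nat.sqrt m/8+1) + 1) with hcm | hcm
    · have h1 : m ≤ t := by omega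
      have h2 : (m:ℝ) ≤ t := by exact_mod_cast h1
      linarith [Real.sqrt_nonneg (m:ℝ)]
    · have h1 : Nat.sqrt m + 1 ≤ 4*t := by omega
      have h2 : (Nat.sqrt m :ℝ) + 1 ≤ 4*(t:ℝ) := by exact_mod_cast h1
      linarith
  -- ρ^t ≤ exp(-(√m (2q-1)/4))
  have hexpt : ρ^t ≤ Real.exp (-(Real.sqrt m * (2*q-1)/4)) := by
    have hρe : ρ ≤ Real.exp (-(2*q-1)) := by
      have h1 : ρ ≤ 1 - (2*q-1) := by
        rw [hρ, div_le_iff₀ hq0]; nlinarith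
      have h2 := Real.add_one_le_exp (-(2*q-1))
      linarith
    calc ρ^t ≤ (Real.exp (-(2*q-1)))^t := pow_le_pow_left₀ hρ0 hρe t
      _ = Real.exp (t * -(2*q-1)) := by rw [← Real.exp_nat_mul]
      _ ≤ Real.exp (-(Real.sqrt m * (2*q-1)/4)) := by
          apply Real.exp_le_exp.mpr
          have hε : (0:ℝ) ≤ 2*q-1 := by linarith
          nlinarith [htlb, hε]
  have hρt1 : ρ^t ≤ 1 := pow_le_one₀ hρ0 hρ1
  have hTs0 : 0 ≤ Ts := by
    rw [hTs]; exact Finset.sum_nonneg fun i _ => hbp_nonneg i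
  -- numerator chain
  have hu0 : 0 ≤ Real.sqrt m * (2*q-1)/4 := by
    have := Real.sqrt_nonneg (m:ℝ)
    nlinarith
  have hms := min_half_le_one_sub_exp hu0
  have hc0PA0 : (0:ℝ) ≤ ((1:ℝ)/2)^4096 * PA := by positivity
  have hchain : min (Real.sqrt m * (2*q-1)/4) 1 / 2 * (((1:ℝ)/2)^4096 * PA) ≤ PA - PB := by
    have e1 : (1-ρ^t) * (((1:ℝ)/2)^4096 * PA) ≤ (1-ρ^t) * Ts :=
      mul_le_mul_of_nonneg_left hc0Ts (by linarith)
    have e2 : min (Real.sqrt m * (2*q-1)/4) 1 / 2 * (((1:ℝ)/2)^4096 * PA)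
        ≤ (1-ρ^t) * (((1:ℝ)/2)^4096 * PA) := by
      apply mul_le_mul_of_nonneg_right _ hc0PA0
      have := Real.exp_pos (-(Real.sqrt m * (2*q-1)/4))
      linarith
    linarith
  -- put it together
  have hdpos : 0 < PA + PB := by linarith
  have hdle : PA + PB ≤ 2*PA := by linarith
  have hfrac : min (Real.sqrt m * (2*q-1)/4) 1 / 2 * (((1:ℝ)/2)^4096 * PA) / (2*PA)
      ≤ (PA - PB)/(PA + PB) :=
    div_le_div₀ (by linarith) hchain hdpos hdle
  have hfrac2 : min (Real.sqrt m * (2*q-1)/4) 1 / 2 * (((1:ℝ)/2)^4096 * PA) / (2*PA)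
      = ((1:ℝ)/2)^4096/4 * min (Real.sqrt m * (2*q-1)/4) 1 := by
    field_simp
    ring
  have hminmin : min (Real.sqrt m * (2*q-1)) 1 ≤ 4 * min (Real.sqrt m * (2*q-1)/4) 1 := by
    rcases le_total (Real.sqrt m * (2*q-1)/4) 1 with h | h
    · rw [min_eq_left h]
      have := min_le_left (Real.sqrt m * (2*q-1)) 1
      linarith
    · rw [min_eq_right h]
      have := min_le_right (Real.sqrt m * (2*q-1)) 1
      linarith
  have hfinal : ((1:ℝ)/2)^4096/16 * min (Real.sqrt m * (2*q-1)) 1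
      ≤ ((1:ℝ)/2)^4096/4 * min (Real.sqrt m * (2*q-1)/4) 1 := by
    have hc0pos : (0:ℝ) < ((1:ℝ)/2)^4096 := by positivity
    calc ((1:ℝ)/2)^4096/16 * min (Real.sqrt m * (2*q-1)) 1
        ≤ ((1:ℝ)/2)^4096/16 * (4 * min (Real.sqrt m * (2*q-1)/4) 1) :=
          mul_le_mul_of_nonneg_left hminmin (by positivity)
      _ = ((1:ℝ)/2)^4096/4 * min (Real.sqrt m * (2*q-1)/4) 1 := by ring
  rw [hAsum, hBsum, hEsum, hPAeq, hPBeq, div_sub_div_same]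
  calc ((1:ℝ)/2)^4096/16 * min (Real.sqrt m * (2*q-1)) 1
      ≤ ((1:ℝ)/2)^4096/4 * min (Real.sqrt m * (2*q-1)/4) 1 := hfinal
    _ = min (Real.sqrt m * (2*q-1)/4) 1 / 2 * (((1:ℝ)/2)^4096 * PA) / (2*PA) := hfrac2.symm
    _ ≤ (PA - PB)/(PA + PB) := hfrac

end
end

section
/- Let 0 < C2 < 1 and C3 > 2 be constants and set C4 = (3·C3/(1 − C2))². Let n ≥ 2 be an integer with k ≤ n, assume p_1 ≥ p_j for all j, and let R_{C2} = {i ∈ {1,…,k} : p_i ≤ C2·p_1} be the set of C2-rare opinions. If h·p_1 > C4·log n, then Pr( ∩_{i ∈ R_{C2}} {X_1 > X_i} ) ≥ 1 − 1/n^{C3 − 2}. -/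
open scoped BigOperators

noncomputable section

/-- The number of the `h` i.i.d. samples `ω` that are equal to opinion `i`. -/
def cnt {k h : ℕ} (ω : Fin h → Fin k) (i : Fin k) : ℕ :=
  (Finset.univ.filter fun j => ω j = i).card

/-- The probability of the event `A` under `h` i.i.d. samples drawn from the
probability vector `p` on `Fin k` (multinomial sampling). -/
def multiPr (k h : ℕ) (p : Fin k → ℝ) (A : Set (Fin h → Fin k)) : ℝ :=
  ∑ ω : Fin h → Fin k, A.indicator (fun ω => ∏ j, p (ω j)) ω

/-- The maximal number of samples received by an opinion. -/
def maxCnt {k h : ℕ} (ω : Fin h → Fin k) : ℕ :=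
  Finset.univ.sup (cnt ω)

/-- The number of opinions achieving the maximal number of samples. -/
def numMax {k h : ℕ} (ω : Fin h → Fin k) : ℕ :=
  (Finset.univ.filter fun i => cnt ω i = maxCnt ω).card

/-- The probability that opinion `i` wins the `h`-majority with uniform
tie-breaking, jointly with the event `A`:
`E[ 1_A · 1{X_i = max_l X_l} / #{l : X_l maximal} ]`. -/
def winPrOn (k h : ℕ) (p : Fin k → ℝ) (A : Set (Fin h → Fin k)) (i : Fin k) : ℝ :=
  ∑ ω : Fin h → Fin k,
    (A ∩ {ω' | cnt ω' i = maxCnt ω'}).indicator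
      (fun ω => (∏ j, p (ω j)) / (numMax ω : ℝ)) ω

/-- The probability that opinion `i` wins the `h`-majority with uniform tie-breaking. -/
def winPr (k h : ℕ) (p : Fin k → ℝ) (i : Fin k) : ℝ :=
  winPrOn k h p Set.univ i

/-- `W_{i,strict}`: opinion `i` is the unique most sampled opinion. -/
def Wstrict (k h : ℕ) (i : Fin k) : Set (Fin h → Fin k) :=
  {ω | ∀ j, j ≠ i → cnt ω j < cnt ω i}

/-- `W_{i,ties}`: opinion `i` is among the most sampled opinions. -/
def Wties (k h : ℕ) (i : Fin k) : Set (Fin h → Fin k) :=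
  {ω | ∀ j, j ≠ i → cnt ω j ≤ cnt ω i}

/-- `W_{1,2,strict}`: opinion `i₁` or opinion `i₂` is the unique most sampled opinion. -/
def W12strict (k h : ℕ) (i₁ i₂ : Fin k) : Set (Fin h → Fin k) :=
  Wstrict k h i₁ ∪ Wstrict k h i₂

/-- Opinion 1 (as an element of `Fin k`, assuming `2 ≤ k`). -/
def o₁ (k : ℕ) (hk : 2 ≤ k) : Fin k := ⟨0, by omega⟩

/-- Opinion 2 (as an element of `Fin k`, assuming `2 ≤ k`). -/
def o₂ (k : ℕ) (hk : 2 ≤ k) : Fin k := ⟨1, by omega⟩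

lemma sum_prod_fn (k h : ℕ) (f : Fin k → ℝ) :
    ∑ ω : Fin h → Fin k, ∏ j, f (ω j) = (∑ a, f a) ^ h := by
  calc ∑ ω : Fin h → Fin k, ∏ j, f (ω j)
      = ∑ ω ∈ Fintype.piFinset (fun _ : Fin h => (Finset.univ : Finset (Fin k))),
          ∏ j, f (ω j) := by rw [Fintype.piFinset_univ]
    _ = ∏ _j : Fin h, ∑ a, f a := (Finset.prod_univ_sum _ _).symm
    _ = (∑ a, f a) ^ h := by simp

lemma prod_eq_pow_cnt {k h : ℕ} (ω : Fin h → Fin k) (g : Fin k → ℝ) :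
    ∏ j, g (ω j) = ∏ a, g a ^ cnt ω a := by
  classical
  rw [Finset.prod_comp g ω]
  apply Finset.prod_subset (Finset.subset_univ _)
  intro a _ ha
  have : cnt ω a = 0 := by
    simp only [cnt, Finset.card_eq_zero, Finset.filter_eq_empty_iff]
    intro j _ hj
    exact ha (Finset.mem_image.mpr ⟨j, Finset.mem_univ j, hj⟩)
  simp [cnt] at this ⊢
  simp [this]

lemma prod_eq_two {k : ℕ} (i j : Fin k) (hij : i ≠ j) (f : Fin k → ℝ)
    (hf : ∀ a, a ≠ i → a ≠ j → f a = 1) : ∏ a, f a = f i * f j := by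
  rw [← Finset.prod_pair hij]
  refine (Finset.prod_subset (Finset.subset_univ _) ?_).symm
  intro a _ ha
  simp only [Finset.mem_insert, Finset.mem_singleton, not_or] at ha
  exact hf a ha.1 ha.2

set_option maxHeartbeats 2000000 in
/-- if `h·p_1 > C4·log n` with `C4 = (3·C3/(1 - C2))²`, then with
probability at least `1 - 1/n^(C3-2)` opinion 1 is sampled strictly more than
every `C2`-rare opinion (i.e. every `i` with `p_i ≤ C2·p_1`). -/
theorem rare_opinions_lose
    (C2 C3 : ℝ) (hC2 : 0 < C2) (hC2' : C2 < 1) (hC3 : 2 < C3)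
    (n : ℕ) (hn : 2 ≤ n) (k h : ℕ) (hk : 2 ≤ k) (hh : 1 ≤ h) (hkn : k ≤ n)
    (p : Fin k → ℝ) (hp0 : ∀ i, 0 ≤ p i) (hps : ∑ i, p i = 1)
    (hmax : ∀ j, p j ≤ p (o₁ k hk))
    (hhp : (3 * C3 / (1 - C2)) ^ 2 * Real.log n < (h : ℝ) * p (o₁ k hk)) :
    1 - 1 / (n : ℝ) ^ (C3 - 2) ≤
      multiPr k h p
        {ω | ∀ i, p i ≤ C2 * p (o₁ k hk) → cnt ω i < cnt ω (o₁ k hk)} := by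
  classical
  set i1 : Fin k := o₁ k hk with hi1
  set w : (Fin h → Fin k) → ℝ := fun ω => ∏ j, p (ω j) with hwdef
  have hw : ∀ ω, 0 ≤ w ω := fun ω => Finset.prod_nonneg fun j _ => hp0 _
  have hn0 : (0:ℝ) < n := by positivity
  have hn1 : (1:ℝ) < n := by exact_mod_cast hn
  set L : ℝ := Real.log n with hLdef
  have hL : 0 < L := Real.log_pos hn1
  -- p1 positive
  have hp1pos : 0 < p i1 := by
    by_contra hle
    push_neg at hle
    have hz : ∀ i, p i = 0 := fun i => le_antisymm (le_trans (hmax i) hle) (hp0 i)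
    simp [hz] at hps
  set s : ℝ := Real.sqrt C2 with hsdef
  have hs0 : 0 < s := Real.sqrt_pos.mpr hC2
  have hs1 : s < 1 := by
    rw [hsdef, show (1:ℝ) = Real.sqrt 1 by simp]
    exact Real.sqrt_lt_sqrt hC2.le hC2'
  have hs2 : s * s = C2 := Real.mul_self_sqrt hC2.le
  set z : ℝ := s⁻¹ with hzdef
  have hz0 : 0 < z := by positivity
  have hsz : s * z = 1 := mul_inv_cancel₀ hs0.ne'
  have hz1 : 1 ≤ z := by
    rw [hzdef]
    rw [le_inv_comm₀ one_pos hs0]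
    simpa using hs1.le
  set x : ℝ := p i1 * (1 - C2)^2 / 4 with hxdef
  have hq2 : (0:ℝ) < (1 - C2)^2 := pow_pos (by linarith) 2
  have hx0 : 0 < x := by
    rw [hxdef]
    have := mul_pos hp1pos hq2
    linarith
  -- exponent bound
  have hhx : (C3 - 1) * L ≤ (h:ℝ) * x := by
    have hc : (3 * C3 / (1 - C2)) ^ 2 * (1 - C2)^2 = 9 * C3^2 := by
      have : (1 - C2) ≠ 0 := by linarith
      field_simp
      ring
    have h1 : (3 * C3 / (1 - C2)) ^ 2 * L * ((1 - C2)^2 / 4) < (h:ℝ) * p (o₁ k hk) * ((1 - C2)^2 / 4) := by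
      apply mul_lt_mul_of_pos_right hhp
      linarith
    have h2 : (3 * C3 / (1 - C2)) ^ 2 * L * ((1 - C2)^2 / 4) = 9 * C3^2 / 4 * L := by
      rw [show (3 * C3 / (1 - C2)) ^ 2 * L * ((1 - C2)^2 / 4)
          = ((3 * C3 / (1 - C2)) ^ 2 * (1 - C2)^2) * L / 4 by ring, hc]
      ring
    have h3 : (C3 - 1) * L ≤ 9 * C3^2 / 4 * L := by
      apply mul_le_mul_of_nonneg_right _ hL.le
      nlinarith
    have h4 : (h:ℝ) * p (o₁ k hk) * ((1 - C2)^2 / 4) = (h:ℝ) * x := by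
      rw [hxdef]; ring
    linarith
  have hE : Real.exp (-((h:ℝ) * x)) ≤ (n:ℝ) ^ (-(C3 - 1)) := by
    rw [Real.rpow_def_of_pos hn0]
    apply Real.exp_le_exp.mpr
    rw [← hLdef]
    nlinarith
  -- per-rare-opinion bound
  have key : ∀ i : Fin k, p i ≤ C2 * p i1 →
      multiPr k h p {ω | cnt ω i1 ≤ cnt ω i} ≤ (n:ℝ) ^ (-(C3 - 1)) := by
    intro i hi
    have hii1 : i ≠ i1 := by
      intro e
      rw [e] at hi
      have := mul_lt_of_lt_one_left hp1pos hC2'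
      linarith
    set g : Fin k → ℝ := fun a =>
      1 + (if a = i then z - 1 else 0) + (if a = i1 then s - 1 else 0) with hgdef
    have hg0 : ∀ a, 0 ≤ g a := by
      intro a
      simp only [hgdef]
      split_ifs <;> linarith
    have hgi : g i = z := by simp [hgdef, hii1]
    have hgi1 : g i1 = s := by simp [hgdef, hii1.symm, Ne.symm hii1]
    have hgother : ∀ a, a ≠ i → a ≠ i1 → g a = 1 := by
      intro a h1 h2; simp [hgdef, h1, h2]
    have hprod : ∀ ω : Fin h → Fin k, ∏ j, g (ω j) = z ^ cnt ω i * s ^ cnt ω i1 := by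
      intro ω
      rw [prod_eq_pow_cnt ω g,
        prod_eq_two i i1 hii1 (fun a => g a ^ cnt ω a)
          (fun a h1 h2 => by show g a ^ cnt ω a = 1; rw [hgother a h1 h2, one_pow]), hgi, hgi1]
    have hpt : ∀ ω, Set.indicator {ω' | cnt ω' i1 ≤ cnt ω' i} w ω ≤ w ω * ∏ j, g (ω j) := by
      intro ω
      by_cases hmem : ω ∈ {ω' : Fin h → Fin k | cnt ω' i1 ≤ cnt ω' i}
      · rw [Set.indicator_of_mem hmem]
        apply le_mul_of_one_le_right (hw ω)
        rw [hprod ω]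
        have hle : cnt ω i1 ≤ cnt ω i := hmem
        calc (1:ℝ) = (z * s) ^ cnt ω i1 := by rw [mul_comm, hsz, one_pow]
          _ = z ^ cnt ω i1 * s ^ cnt ω i1 := mul_pow _ _ _
          _ ≤ z ^ cnt ω i * s ^ cnt ω i1 := by
              apply mul_le_mul_of_nonneg_right (pow_le_pow_right₀ hz1 hle)
              positivity
      · rw [Set.indicator_of_notMem hmem]
        exact mul_nonneg (hw ω) (Finset.prod_nonneg fun j _ => hg0 _)
    set S : ℝ := ∑ a, p a * g a with hSdef
    have hSnn : 0 ≤ S := Finset.sum_nonneg fun a _ => mul_nonneg (hp0 a) (hg0 a)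
    have hSval : S = 1 + p i * (z - 1) + p i1 * (s - 1) := by
      rw [hSdef]
      have : ∀ a : Fin k, p a * g a
          = p a + ((if a = i then p a * (z - 1) else 0) + (if a = i1 then p a * (s - 1) else 0)) := by
        intro a
        simp only [hgdef]
        split_ifs <;> ring
      rw [Finset.sum_congr rfl fun a _ => this a, Finset.sum_add_distrib, hps,
        Finset.sum_add_distrib, Finset.sum_ite_eq' Finset.univ i, Finset.sum_ite_eq' Finset.univ i1]
      simp; ring
    have hSle : S ≤ 1 - x := by
      rw [hSval, hxdef]
      have h1 : p i * (z - 1) ≤ C2 * p i1 * (z - 1) :=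
        mul_le_mul_of_nonneg_right hi (by linarith)
      have hczs : C2 * z = s := by
        rw [← hs2]; rw [mul_assoc, hsz, mul_one]
      have hthis : C2 * (z - 1) = s - C2 := by rw [mul_sub, hczs, mul_one]
      have h2 : 1 + C2 * p i1 * (z - 1) + p i1 * (s - 1) = 1 - p i1 * (1 - s)^2 := by
        linear_combination (p i1) * hthis + (p i1) * hs2
      have h3 : (1 - C2) / 2 ≤ 1 - s := by nlinarith [sq_nonneg (1 - s), hs2]
      have h4 : ((1 - C2)/2)^2 ≤ (1 - s)^2 :=
        pow_le_pow_left₀ (by linarith) h3 2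
      have h5 : p i1 * ((1 - C2)/2)^2 ≤ p i1 * (1 - s)^2 :=
        mul_le_mul_of_nonneg_left h4 hp1pos.le
      have h6 : p i1 * ((1 - C2)/2)^2 = p i1 * (1 - C2)^2/4 := by ring
      linarith
    have hmain : multiPr k h p {ω | cnt ω i1 ≤ cnt ω i} ≤ S ^ h := by
      unfold multiPr
      calc ∑ ω : Fin h → Fin k, Set.indicator {ω' | cnt ω' i1 ≤ cnt ω' i} w ω
          ≤ ∑ ω : Fin h → Fin k, w ω * ∏ j, g (ω j) :=
            Finset.sum_le_sum fun ω _ => hpt ω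
        _ = ∑ ω : Fin h → Fin k, ∏ j, (p (ω j) * g (ω j)) := by
            apply Finset.sum_congr rfl
            intro ω _
            rw [hwdef, ← Finset.prod_mul_distrib]
        _ = S ^ h := by rw [hSdef, ← sum_prod_fn k h (fun a => p a * g a)]
    have hSh : S ^ h ≤ Real.exp (-((h:ℝ) * x)) := by
      calc S ^ h ≤ (1 - x) ^ h := pow_le_pow_left₀ hSnn hSle h
        _ ≤ Real.exp (-x) ^ h := by
            apply pow_le_pow_left₀ (by linarith)
            nlinarith [Real.add_one_le_exp (-x)]
        _ = Real.exp (-((h:ℝ) * x)) := by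
            rw [← Real.exp_nat_mul]; ring_nf
    linarith [hE]
  -- union bound
  set R : Finset (Fin k) := Finset.univ.filter (fun i => p i ≤ C2 * p i1) with hRdef
  have hcard : (R.card : ℝ) ≤ n := by
    have h1 : R.card ≤ k := by
      have := Finset.card_le_card (Finset.subset_univ R)
      simpa using this
    have : R.card ≤ n := le_trans h1 hkn
    exact_mod_cast this
  set G : Set (Fin h → Fin k) := {ω | ∀ i, p i ≤ C2 * p i1 → cnt ω i < cnt ω i1} with hGdef
  have htot : ∑ ω : Fin h → Fin k, w ω = 1 := by
    rw [hwdef, sum_prod_fn k h p, hps, one_pow]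
  have hsplit : multiPr k h p G = 1 - ∑ ω : Fin h → Fin k, Set.indicator Gᶜ w ω := by
    unfold multiPr
    have : ∀ ω, Set.indicator G w ω = w ω - Set.indicator Gᶜ w ω := by
      intro ω
      by_cases hm : ω ∈ G
      · rw [Set.indicator_of_mem hm, Set.indicator_of_notMem (by simpa using hm)]
        ring
      · rw [Set.indicator_of_notMem hm, Set.indicator_of_mem (by simpa using hm)]
        ring
    rw [Finset.sum_congr rfl fun ω _ => this ω, Finset.sum_sub_distrib, htot]
  have hunion : ∑ ω : Fin h → Fin k, Set.indicator Gᶜ w ω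
      ≤ ∑ i ∈ R, multiPr k h p {ω | cnt ω i1 ≤ cnt ω i} := by
    have hpt : ∀ ω, Set.indicator Gᶜ w ω
        ≤ ∑ i ∈ R, Set.indicator {ω' | cnt ω' i1 ≤ cnt ω' i} w ω := by
      intro ω
      by_cases hm : ω ∈ Gᶜ
      · rw [Set.indicator_of_mem hm]
        have : ∃ i, p i ≤ C2 * p i1 ∧ cnt ω i1 ≤ cnt ω i := by
          simp only [hGdef, Set.mem_compl_iff, Set.mem_setOf_eq, not_forall, not_lt] at hm
          obtain ⟨i, h1, h2⟩ := hm
          exact ⟨i, h1, h2⟩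
        obtain ⟨i, hi1', hi2⟩ := this
        have hiR : i ∈ R := by simp [hRdef, hi1']
        have : w ω = Set.indicator {ω' | cnt ω' i1 ≤ cnt ω' i} w ω :=
          (Set.indicator_of_mem
            (show ω ∈ {ω' : Fin h → Fin k | cnt ω' i1 ≤ cnt ω' i} from hi2) w).symm
        rw [this]
        exact Finset.single_le_sum
          (f := fun i => Set.indicator {ω' | cnt ω' i1 ≤ cnt ω' i} w ω)
          (fun j _ => Set.indicator_nonneg (fun ω' _ => hw ω') ω) hiR
      · rw [Set.indicator_of_notMem hm]
        exact Finset.sum_nonneg fun j _ =>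
          Set.indicator_nonneg (fun ω' _ => hw ω') ω
    calc ∑ ω : Fin h → Fin k, Set.indicator Gᶜ w ω
        ≤ ∑ ω : Fin h → Fin k, ∑ i ∈ R, Set.indicator {ω' | cnt ω' i1 ≤ cnt ω' i} w ω :=
          Finset.sum_le_sum fun ω _ => hpt ω
      _ = ∑ i ∈ R, multiPr k h p {ω | cnt ω i1 ≤ cnt ω i} := by
          rw [Finset.sum_comm]; rfl
  have hfin : ∑ i ∈ R, multiPr k h p {ω | cnt ω i1 ≤ cnt ω i} ≤ 1 / (n:ℝ) ^ (C3 - 2) := by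
    calc ∑ i ∈ R, multiPr k h p {ω | cnt ω i1 ≤ cnt ω i}
        ≤ ∑ _i ∈ R, (n:ℝ) ^ (-(C3 - 1)) := by
          apply Finset.sum_le_sum
          intro i hiR
          exact key i (by simpa [hRdef] using hiR)
      _ = (R.card : ℝ) * (n:ℝ) ^ (-(C3 - 1)) := by rw [Finset.sum_const, nsmul_eq_mul]
      _ ≤ (n:ℝ) * (n:ℝ) ^ (-(C3 - 1)) := by
          apply mul_le_mul_of_nonneg_right hcard
          positivity
      _ = 1 / (n:ℝ) ^ (C3 - 2) := by
          rw [show ((n:ℝ) * (n:ℝ) ^ (-(C3 - 1))) = (n:ℝ) ^ (1:ℝ) * (n:ℝ) ^ (-(C3 - 1)) by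
              rw [Real.rpow_one],
            ← Real.rpow_add hn0, show (1:ℝ) + -(C3 - 1) = -(C3 - 2) by ring,
            Real.rpow_neg hn0.le, one_div]
  linarith [hsplit, hunion, hfin]
end
end

section
/- There exists a natural number n0 such that for all integers n ≥ n0 with k ≤ n the following holds: if p_1 ≥ p_2 ≥ … ≥ p_k and h·p_1 ≥ 324·log n, then Pr(W_1) ≥ p_1/3, where Pr(W_1) is the probability that opinion 1 wins the h-majority with uniform tie-breaking. -/
open scoped BigOperators

noncomputable section

namespace MajorityAux

open Finset Real

variable {k h : ℕ}

lemma weight_nonneg (p : Fin k → ℝ) (hp : ∀ i, 0 ≤ p i) (ω : Fin h → Fin k) :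
    0 ≤ ∏ j, p (ω j) := Finset.prod_nonneg fun j _ => hp _

lemma sum_prod_comp (q : Fin k → ℝ) :
    ∑ ω : Fin h → Fin k, ∏ j, q (ω j) = (∑ l, q l) ^ h := by
  have := Finset.prod_univ_sum (fun _ : Fin h => (Finset.univ : Finset (Fin k)))
    (fun _ l => q l)
  simp only [Fintype.piFinset_univ] at this
  rw [← this, Finset.prod_const, Finset.card_univ, Fintype.card_fin]

lemma prod_ite_pow (ω : Fin h → Fin k) (i : Fin k) (r : ℝ) :
    ∏ j, (if ω j = i then r else 1) = r ^ cnt ω i := by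
  rw [Finset.prod_ite, Finset.prod_const, Finset.prod_const, one_pow, mul_one]
  rfl

lemma mgf_eq (p : Fin k → ℝ) (hs : ∑ l, p l = 1) (i : Fin k) (r : ℝ) :
    ∑ ω : Fin h → Fin k, (∏ j, p (ω j)) * r ^ cnt ω i = (1 + p i * (r - 1)) ^ h := by
  have key : ∀ ω : Fin h → Fin k, (∏ j, p (ω j)) * r ^ cnt ω i
      = ∏ j, Function.update p i (p i * r) (ω j) := by
    intro ω
    rw [← prod_ite_pow ω i r, ← Finset.prod_mul_distrib]
    refine Finset.prod_congr rfl fun j _ => ?_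
    by_cases hj : ω j = i <;> simp [hj, Function.update_apply]
  rw [Finset.sum_congr rfl fun ω _ => key ω, sum_prod_comp]
  congr 1
  rw [Finset.sum_update_of_mem (Finset.mem_univ i)]
  have h2 : ∑ l ∈ Finset.univ \ {i}, p l = 1 - p i := by
    have := Finset.sum_sdiff_eq_sub (Finset.singleton_subset_iff.2 (Finset.mem_univ i)) (f := p)
    rw [hs, Finset.sum_singleton] at this
    exact this
  rw [h2]; ring

lemma pow_le_exp (x : ℝ) (hx : 0 ≤ 1 + x) (m : ℕ) : (1 + x) ^ m ≤ Real.exp ((m : ℝ) * x) := by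
  calc (1 + x) ^ m ≤ Real.exp x ^ m := by
        refine pow_le_pow_left₀ hx ?_ m
        linarith [Real.add_one_le_exp x]
    _ = Real.exp ((m : ℝ) * x) := by rw [← Real.exp_nat_mul]

lemma tail_generic (p : Fin k → ℝ) (hp : ∀ i, 0 ≤ p i) (hs : ∑ l, p l = 1)
    (i : Fin k) (hp1 : p i ≤ 1) (r T : ℝ) (hr0 : 0 < r)
    (A : Set (Fin h → Fin k))
    (hA : ∀ ω ∈ A, (1:ℝ) ≤ r ^ ((cnt ω i : ℝ) - T)) :
    multiPr k h p A ≤ Real.exp ((h : ℝ) * p i * (r - 1) - T * Real.log r) := by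
  classical
  have hbase : 0 ≤ 1 + p i * (r - 1) := by nlinarith [hp i]
  have step1 : multiPr k h p A
      ≤ ∑ ω : Fin h → Fin k, (∏ j, p (ω j)) * r ^ ((cnt ω i : ℝ) - T) := by
    refine Finset.sum_le_sum fun ω _ => ?_
    rw [Set.indicator_apply]
    split_ifs with hω
    · nlinarith [weight_nonneg p hp ω, hA ω hω]
    · have h1 := weight_nonneg p hp ω
      positivity
  have step2 : ∑ ω : Fin h → Fin k, (∏ j, p (ω j)) * r ^ ((cnt ω i : ℝ) - T)
      = (1 + p i * (r - 1)) ^ h / r ^ T := by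
    rw [← mgf_eq p hs i r, Finset.sum_div]
    refine Finset.sum_congr rfl fun ω _ => ?_
    rw [Real.rpow_sub hr0, Real.rpow_natCast, mul_div_assoc]
  have step3 : (1 + p i * (r - 1)) ^ h / r ^ T
      ≤ Real.exp ((h : ℝ) * p i * (r - 1) - T * Real.log r) := by
    rw [show (r : ℝ) ^ T = Real.exp (T * Real.log r) by
          rw [Real.rpow_def_of_pos hr0, mul_comm], Real.exp_sub]
    gcongr
    exact (pow_le_exp _ hbase h).trans_eq (by ring_nf)
  linarith

lemma tail_upper (p : Fin k → ℝ) (hp : ∀ i, 0 ≤ p i) (hs : ∑ l, p l = 1)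
    (i : Fin k) (hp1 : p i ≤ 1) (r T : ℝ) (hr : 1 ≤ r) :
    multiPr k h p {ω | T ≤ (cnt ω i : ℝ)} ≤
      Real.exp ((h : ℝ) * p i * (r - 1) - T * Real.log r) := by
  refine tail_generic p hp hs i hp1 r T (lt_of_lt_of_le one_pos hr) _ fun ω hω => ?_
  calc (1:ℝ) = r ^ (0:ℝ) := (Real.rpow_zero r).symm
    _ ≤ r ^ ((cnt ω i : ℝ) - T) :=
        Real.rpow_le_rpow_of_exponent_le hr (by simpa [sub_nonneg] using hω)

lemma tail_lower (p : Fin k → ℝ) (hp : ∀ i, 0 ≤ p i) (hs : ∑ l, p l = 1)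
    (i : Fin k) (hp1 : p i ≤ 1) (r T : ℝ) (hr0 : 0 < r) (hr1 : r ≤ 1) :
    multiPr k h p {ω | (cnt ω i : ℝ) ≤ T} ≤
      Real.exp ((h : ℝ) * p i * (r - 1) - T * Real.log r) := by
  refine tail_generic p hp hs i hp1 r T hr0 _ fun ω hω => ?_
  exact Real.one_le_rpow_of_pos_of_le_one_of_nonpos hr0 hr1 (by simpa [sub_nonpos] using hω)

lemma cnt_comp (e : Fin k ≃ Fin k) (ω : Fin h → Fin k) (l : Fin k) :
    cnt (⇑e ∘ ω) l = cnt ω (e.symm l) := by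
  unfold cnt
  congr 1
  apply Finset.filter_congr
  intro j _
  simp [Function.comp, Equiv.apply_eq_iff_eq_symm_apply]

lemma maxCnt_comp (e : Fin k ≃ Fin k) (ω : Fin h → Fin k) :
    maxCnt (⇑e ∘ ω) = maxCnt ω := by
  unfold maxCnt
  apply le_antisymm
  · exact Finset.sup_le fun l _ => by
      rw [cnt_comp]; exact Finset.le_sup (Finset.mem_univ _)
  · refine Finset.sup_le fun l _ => ?_
    have : cnt (⇑e ∘ ω) (e l) = cnt ω l := by rw [cnt_comp, Equiv.symm_apply_apply]
    rw [← this]; exact Finset.le_sup (Finset.mem_univ _)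

lemma numMax_comp (e : Fin k ≃ Fin k) (ω : Fin h → Fin k) :
    numMax (⇑e ∘ ω) = numMax ω := by
  unfold numMax
  rw [maxCnt_comp]
  apply Finset.card_equiv e.symm
  intro l
  simp [cnt_comp]

lemma prod_eq_prod_pow (p : Fin k → ℝ) (ω : Fin h → Fin k) :
    ∏ j, p (ω j) = ∏ l, p l ^ cnt ω l := by
  conv_lhs => rw [← Finset.prod_fiberwise_of_maps_to
    (fun j (_ : j ∈ Finset.univ) => Finset.mem_univ (ω j)) (fun j => p (ω j))]
  refine Finset.prod_congr rfl fun l _ => ?_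
  rw [Finset.prod_congr rfl (fun j hj => congrArg p (Finset.mem_filter.1 hj).2),
    Finset.prod_const]
  rfl

lemma numMax_pos (hk : 0 < k) (ω : Fin h → Fin k) : 0 < numMax ω := by
  obtain ⟨i, -, hi⟩ := Finset.exists_mem_eq_sup (Finset.univ : Finset (Fin k))
    ⟨⟨0, hk⟩, Finset.mem_univ _⟩ (cnt ω)
  exact Finset.card_pos.2 ⟨i, Finset.mem_filter.2 ⟨Finset.mem_univ _, hi.symm⟩⟩

lemma prod_swap_le (p : Fin k → ℝ) (hp : ∀ i, 0 ≤ p i) {i₁ i₂ : Fin k}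
    (h12 : p i₂ ≤ p i₁) (hne : i₁ ≠ i₂) (ω : Fin h → Fin k)
    (hcnt : cnt ω i₂ ≤ cnt ω i₁) :
    ∏ j, p (Equiv.swap i₁ i₂ (ω j)) ≤ ∏ j, p (ω j) := by
  have hL : ∏ j, p (Equiv.swap i₁ i₂ (ω j)) = ∏ l, p l ^ cnt ω (Equiv.swap i₁ i₂ l) := by
    rw [show ∏ j, p (Equiv.swap i₁ i₂ (ω j)) = ∏ j, p ((⇑(Equiv.swap i₁ i₂) ∘ ω) j) from rfl,
      prod_eq_prod_pow p (⇑(Equiv.swap i₁ i₂) ∘ ω)]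
    refine Finset.prod_congr rfl fun l _ => ?_
    rw [cnt_comp, Equiv.symm_swap]
  rw [hL, prod_eq_prod_pow p ω]
  have hmem2 : i₂ ∈ Finset.univ.erase i₁ := Finset.mem_erase.2 ⟨(Ne.symm hne), Finset.mem_univ _⟩
  rw [← Finset.mul_prod_erase Finset.univ _ (Finset.mem_univ i₁),
      ← Finset.mul_prod_erase _ _ hmem2,
      ← Finset.mul_prod_erase Finset.univ (fun l => p l ^ cnt ω l) (Finset.mem_univ i₁),
      ← Finset.mul_prod_erase _ (fun l => p l ^ cnt ω l) hmem2]
  have hrest : ∏ l ∈ (Finset.univ.erase i₁).erase i₂, p l ^ cnt ω (Equiv.swap i₁ i₂ l)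
      = ∏ l ∈ (Finset.univ.erase i₁).erase i₂, p l ^ cnt ω l := by
    refine Finset.prod_congr rfl fun l hl => ?_
    have h1 : l ≠ i₂ := (Finset.mem_erase.1 hl).1
    have h2 : l ≠ i₁ := (Finset.mem_erase.1 (Finset.mem_erase.1 hl).2).1
    rw [Equiv.swap_apply_of_ne_of_ne h2 h1]
  rw [hrest, Equiv.swap_apply_left, Equiv.swap_apply_right]
  have hrest0 : 0 ≤ ∏ l ∈ (Finset.univ.erase i₁).erase i₂, p l ^ cnt ω l :=
    Finset.prod_nonneg fun l _ => pow_nonneg (hp l) _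
  have key : p i₁ ^ cnt ω i₂ * p i₂ ^ cnt ω i₁ ≤ p i₁ ^ cnt ω i₁ * p i₂ ^ cnt ω i₂ := by
    obtain ⟨d, hd⟩ := Nat.exists_eq_add_of_le hcnt
    rw [hd, pow_add]
    calc p i₁ ^ cnt ω i₂ * (p i₂ ^ cnt ω i₂ * p i₂ ^ d)
        ≤ p i₁ ^ cnt ω i₂ * (p i₂ ^ cnt ω i₂ * p i₁ ^ d) := by
          refine mul_le_mul_of_nonneg_left ?_ (pow_nonneg (hp i₁) _)
          exact mul_le_mul_of_nonneg_left (pow_le_pow_left₀ (hp i₂) h12 d)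
            (pow_nonneg (hp i₂) _)
      _ = p i₁ ^ cnt ω i₂ * p i₁ ^ d * p i₂ ^ cnt ω i₂ := by ring
      _ = p i₁ ^ (cnt ω i₂ + d) * p i₂ ^ cnt ω i₂ := by rw [pow_add]
  nlinarith [key, hrest0, mul_le_mul_of_nonneg_right key hrest0]

lemma winPr_eq (p : Fin k → ℝ) (i : Fin k) :
    winPr k h p i = ∑ ω : Fin h → Fin k,
      (if cnt ω i = maxCnt ω then (∏ j, p (ω j)) / (numMax ω : ℝ) else 0) := by
  classical
  unfold winPr winPrOn
  refine Finset.sum_congr rfl fun ω _ => ?_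
  rw [Set.indicator_apply]
  simp [Set.mem_setOf_eq]

lemma winPr_nonneg (p : Fin k → ℝ) (hp : ∀ i, 0 ≤ p i) (i : Fin k) :
    0 ≤ winPr k h p i := by
  classical
  rw [winPr_eq]
  refine Finset.sum_nonneg fun ω _ => ?_
  split_ifs
  · have := weight_nonneg p hp ω; positivity
  · exact le_refl 0

lemma winPr_mono (p : Fin k → ℝ) (hp : ∀ i, 0 ≤ p i) {i₁ i₂ : Fin k}
    (h12 : p i₂ ≤ p i₁) : winPr k h p i₂ ≤ winPr k h p i₁ := by
  classical
  rcases eq_or_ne i₁ i₂ with rfl | hne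
  · exact le_refl _
  have hk0 : 0 < k := i₁.pos
  rw [winPr_eq, winPr_eq]
  have hre : ∑ ω : Fin h → Fin k,
      (if cnt ω i₂ = maxCnt ω then (∏ j, p (ω j)) / (numMax ω : ℝ) else 0)
      = ∑ ω : Fin h → Fin k,
      (if cnt ω i₁ = maxCnt ω then (∏ j, p (Equiv.swap i₁ i₂ (ω j))) / (numMax ω : ℝ) else 0) := by
    rw [← Equiv.sum_comp (Equiv.arrowCongr (Equiv.refl (Fin h)) (Equiv.swap i₁ i₂))
      (fun ω => if cnt ω i₂ = maxCnt ω then (∏ j, p (ω j)) / (numMax ω : ℝ) else 0)]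
    refine Finset.sum_congr rfl fun ω _ => ?_
    have hΦ : (Equiv.arrowCongr (Equiv.refl (Fin h)) (Equiv.swap i₁ i₂)) ω
        = ⇑(Equiv.swap i₁ i₂) ∘ ω := by
      ext j; simp [Equiv.arrowCongr]
    rw [hΦ, cnt_comp, maxCnt_comp, numMax_comp, Equiv.symm_swap, Equiv.swap_apply_right]
    rfl
  rw [hre]
  refine Finset.sum_le_sum fun ω _ => ?_
  split_ifs with hc
  · have hcnt : cnt ω i₂ ≤ cnt ω i₁ := hc ▸ Finset.le_sup (Finset.mem_univ i₂)
    have hden : (0:ℝ) < (numMax ω : ℝ) := by exact_mod_cast numMax_pos hk0 ω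
    exact (div_le_div_iff_of_pos_right hden).2 (prod_swap_le p hp h12 hne ω hcnt)
  · exact le_refl 0

lemma winPr_sum (hk : 0 < k) (p : Fin k → ℝ) (hs : ∑ l, p l = 1) :
    ∑ i, winPr k h p i = 1 := by
  classical
  rw [Finset.sum_congr rfl fun i _ => winPr_eq p i, Finset.sum_comm]
  have key : ∀ ω : Fin h → Fin k,
      (∑ i, if cnt ω i = maxCnt ω then (∏ j, p (ω j)) / (numMax ω : ℝ) else 0)
      = ∏ j, p (ω j) := by
    intro ω
    rw [← Finset.sum_filter, Finset.sum_const, nsmul_eq_mul]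
    have hnm : (numMax ω : ℝ) ≠ 0 := by
      exact_mod_cast (numMax_pos hk ω).ne'
    rw [show (Finset.univ.filter fun i => cnt ω i = maxCnt ω).card = numMax ω from rfl]
    field_simp
  rw [Finset.sum_congr rfl fun ω _ => key ω, sum_prod_comp, hs, one_pow]

lemma winPr_le_multiPr (p : Fin k → ℝ) (hp : ∀ i, 0 ≤ p i) (i i₀ : Fin k) :
    winPr k h p i ≤ multiPr k h p {ω | cnt ω i₀ ≤ cnt ω i} := by
  classical
  rw [winPr_eq]
  unfold multiPr
  refine Finset.sum_le_sum fun ω _ => ?_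
  rw [Set.indicator_apply]
  by_cases hc : cnt ω i = maxCnt ω
  · have hmem : ω ∈ {ω : Fin h → Fin k | cnt ω i₀ ≤ cnt ω i} := by
      simp only [Set.mem_setOf_eq, hc]
      exact Finset.le_sup (Finset.mem_univ i₀)
    rw [if_pos hc, if_pos hmem]
    refine div_le_self (weight_nonneg p hp ω) ?_
    exact_mod_cast numMax_pos i.pos ω
  · rw [if_neg hc]
    split_ifs
    · exact weight_nonneg p hp ω
    · exact le_refl 0

lemma multiPr_mono (p : Fin k → ℝ) (hp : ∀ i, 0 ≤ p i) {A B : Set (Fin h → Fin k)}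
    (hAB : A ⊆ B) : multiPr k h p A ≤ multiPr k h p B := by
  refine Finset.sum_le_sum fun ω _ => ?_
  exact Set.indicator_le_indicator_of_subset hAB (fun ω => weight_nonneg p hp ω) ω

lemma multiPr_union_le (p : Fin k → ℝ) (hp : ∀ i, 0 ≤ p i) (A B : Set (Fin h → Fin k)) :
    multiPr k h p (A ∪ B) ≤ multiPr k h p A + multiPr k h p B := by
  classical
  unfold multiPr
  rw [← Finset.sum_add_distrib]
  refine Finset.sum_le_sum fun ω _ => ?_
  rw [Set.indicator_apply, Set.indicator_apply, Set.indicator_apply]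
  have hw := weight_nonneg p hp ω
  by_cases hA : ω ∈ A
  · rw [if_pos (Set.mem_union_left _ hA), if_pos hA]
    split_ifs <;> linarith
  · by_cases hB : ω ∈ B
    · rw [if_pos (Set.mem_union_right _ hB), if_neg hA, if_pos hB]
      linarith
    · rw [if_neg (fun hc => hc.elim hA hB), if_neg hA, if_neg hB]
      linarith

lemma log_four_thirds_le : Real.log (4/3) ≤ 3/10 := by
  have e1 : (2.7182818283 : ℝ) < Real.exp 1 := Real.exp_one_gt_d9
  have e2 : (1:ℝ) + 1/5 ≤ Real.exp (1/5) := by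
    have := Real.add_one_le_exp (1/5:ℝ); linarith
  have h1 : ((4:ℝ)/3) ^ (4:ℕ) ≤ Real.exp (6/5) := by
    have hms : Real.exp (6/5) = Real.exp 1 * Real.exp (1/5) := by
      rw [← Real.exp_add]; norm_num
    rw [hms]
    nlinarith [Real.exp_pos (1/5:ℝ)]
  have h2 : (4:ℝ)/3 ≤ Real.exp (3/10) := by
    by_contra hcon
    push_neg at hcon
    have h3 : Real.exp (3/10) ^ (4:ℕ) < ((4:ℝ)/3) ^ (4:ℕ) :=
      pow_lt_pow_left₀ hcon (Real.exp_pos _).le (by norm_num)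
    have h4 : Real.exp (3/10) ^ (4:ℕ) = Real.exp (6/5) := by
      rw [← Real.exp_nat_mul]; norm_num
    linarith
  calc Real.log (4/3) ≤ Real.log (Real.exp (3/10)) :=
        Real.log_le_log (by norm_num) h2
    _ = 3/10 := Real.log_exp _

lemma exp_le_inv_sq {n : ℕ} (hn : 1 ≤ n) (x : ℝ) (hx : x ≤ -(2 * Real.log n)) :
    Real.exp x ≤ 1 / (n:ℝ)^2 := by
  have hn0 : (0:ℝ) < n := by exact_mod_cast hn
  have h2 : Real.exp (-(2 * Real.log n)) = 1 / (n:ℝ)^2 := by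
    rw [Real.exp_neg, show (2:ℝ) * Real.log n = ((2:ℕ):ℝ) * Real.log n by norm_num,
      Real.exp_nat_mul, Real.exp_log hn0, one_div]
  rw [← h2]
  exact Real.exp_le_exp.2 hx

end MajorityAux

open MajorityAux

/-- if `p_1 ≥ p_2 ≥ … ≥ p_k`, `k ≤ n` and `h·p_1 ≥ 324·log n`, then the
probability that opinion 1 wins the `h`-majority with uniform tie-breaking is at
least `p_1/3` (for `n` large enough). -/
theorem opinion_one_wins_prob_lower_bound :
    ∃ n0 : ℕ, ∀ (n k h : ℕ), n0 ≤ n → ∀ (hk : 2 ≤ k), 1 ≤ h → k ≤ n →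
      ∀ p : Fin k → ℝ, (∀ i, 0 ≤ p i) → ∑ i, p i = 1 →
        (∀ i j : Fin k, i ≤ j → p j ≤ p i) →
        324 * Real.log n ≤ (h : ℝ) * p (o₁ k hk) →
        p (o₁ k hk) / 3 ≤ winPr k h p (o₁ k hk) := by
  classical
  refine ⟨6, ?_⟩
  intro n k h hn hk hh hkn p hp0 hps hsort hlog
  set i₁ : Fin k := o₁ k hk with hi₁def
  have hk0 : 0 < k := by omega
  have hn1 : 1 ≤ n := by omega
  have hn6 : (6:ℝ) ≤ (n:ℝ) := by exact_mod_cast hn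
  have hn0 : (0:ℝ) < (n:ℝ) := by linarith
  have hlogn : 0 ≤ Real.log n := Real.log_nonneg (by linarith)
  have hpmax : ∀ i, p i ≤ p i₁ := fun i => hsort i₁ i (by simp [hi₁def, o₁, Fin.le_def])
  have hp1pos : 0 < p i₁ := by
    by_contra hcon
    push_neg at hcon
    have hsn : ∑ i, p i ≤ 0 := Finset.sum_nonpos fun i _ => le_trans (hpmax i) hcon
    rw [hps] at hsn; linarith
  have hple1 : ∀ i, p i ≤ 1 := fun i => by
    have := Finset.single_le_sum (f := p) (fun j _ => hp0 j) (Finset.mem_univ i)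
    rw [hps] at this; exact this
  set X : ℝ := (h : ℝ) * p i₁ with hXdef
  have hX0 : 0 ≤ X := by positivity
  set T : ℝ := 3/4 * X with hTdef
  have tailA : ∀ i : Fin k, p i ≤ p i₁ / 2 →
      multiPr k h p {ω | T ≤ (cnt ω i : ℝ)} ≤ 1 / (n:ℝ)^2 := by
    intro i hi
    refine le_trans (tail_upper p hp0 hps i (hple1 i) 2 T (by norm_num))
      (exp_le_inv_sq hn1 _ ?_)
    have hl2 : (0.6931471803:ℝ) < Real.log 2 := Real.log_two_gt_d9
    have hhi : (h:ℝ) * p i ≤ X / 2 := by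
      rw [hXdef]
      have := mul_le_mul_of_nonneg_left hi (Nat.cast_nonneg h : (0:ℝ) ≤ (h:ℝ))
      linarith
    have e1 : (3/4) * X * (0.6931471803:ℝ) ≤ T * Real.log 2 := by
      rw [hTdef]
      exact mul_le_mul_of_nonneg_left hl2.le (by linarith)
    linarith [hlog]
  have tailB : multiPr k h p {ω | (cnt ω i₁ : ℝ) ≤ T} ≤ 1 / (n:ℝ)^2 := by
    refine le_trans (tail_lower p hp0 hps i₁ (hple1 i₁) (3/4) T (by norm_num) (by norm_num))
      (exp_le_inv_sq hn1 _ ?_)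
    have hlog34 : Real.log (3/4 : ℝ) = - Real.log (4/3 : ℝ) := by
      rw [← Real.log_inv]; norm_num
    have e1 : T * Real.log (4/3) ≤ (3/4) * X * (3/10) := by
      rw [hTdef]
      exact mul_le_mul_of_nonneg_left log_four_thirds_le (by linarith)
    rw [hlog34]
    linarith [hlog]
  set S : Finset (Fin k) := Finset.univ.filter (fun i => p i₁ / 2 < p i) with hSdef
  have hi₁S : i₁ ∈ S := Finset.mem_filter.2 ⟨Finset.mem_univ _, by linarith⟩
  have hcardS : (S.card : ℝ) * (p i₁ / 2) ≤ 1 := by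
    calc (S.card : ℝ) * (p i₁ / 2) = ∑ _i ∈ S, p i₁ / 2 := by
          rw [Finset.sum_const, nsmul_eq_mul]
      _ ≤ ∑ i ∈ S, p i := Finset.sum_le_sum fun i hi => (Finset.mem_filter.1 hi).2.le
      _ ≤ ∑ i, p i := Finset.sum_le_sum_of_subset_of_nonneg (Finset.subset_univ S)
          (fun i _ _ => hp0 i)
      _ = 1 := hps
  have hsplit : ∑ i ∈ S, winPr k h p i
      + ∑ i ∈ Finset.univ.filter (fun i => ¬ (p i₁ / 2 < p i)), winPr k h p i = 1 := by
    rw [hSdef, Finset.sum_filter_add_sum_filter_not]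
    exact winPr_sum hk0 p hps
  have hSbound : ∑ i ∈ S, winPr k h p i ≤ (S.card : ℝ) * winPr k h p i₁ := by
    calc ∑ i ∈ S, winPr k h p i ≤ ∑ _i ∈ S, winPr k h p i₁ :=
          Finset.sum_le_sum fun i _ => winPr_mono p hp0 (hpmax i)
      _ = (S.card : ℝ) * winPr k h p i₁ := by rw [Finset.sum_const, nsmul_eq_mul]
  have hCbound : ∑ i ∈ Finset.univ.filter (fun i => ¬ (p i₁ / 2 < p i)), winPr k h p i
      ≤ 2 / (n:ℝ) := by
    have hterm : ∀ i ∈ Finset.univ.filter (fun i => ¬ (p i₁ / 2 < p i)),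
        winPr k h p i ≤ 2 / (n:ℝ)^2 := by
      intro i hi
      have hple : p i ≤ p i₁ / 2 := le_of_not_gt (Finset.mem_filter.1 hi).2
      have hsub : {ω : Fin h → Fin k | cnt ω i₁ ≤ cnt ω i}
          ⊆ {ω | T ≤ (cnt ω i : ℝ)} ∪ {ω | (cnt ω i₁ : ℝ) ≤ T} := by
        intro ω hω
        by_cases hT : T ≤ (cnt ω i : ℝ)
        · exact Or.inl hT
        · refine Or.inr ?_
          have : ((cnt ω i₁ : ℕ) : ℝ) ≤ ((cnt ω i : ℕ) : ℝ) := by exact_mod_cast hω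
          simp only [Set.mem_setOf_eq]
          linarith [le_of_not_ge hT]
      calc winPr k h p i ≤ multiPr k h p {ω | cnt ω i₁ ≤ cnt ω i} :=
            winPr_le_multiPr p hp0 i i₁
        _ ≤ multiPr k h p ({ω | T ≤ (cnt ω i : ℝ)} ∪ {ω | (cnt ω i₁ : ℝ) ≤ T}) :=
            multiPr_mono p hp0 hsub
        _ ≤ multiPr k h p {ω | T ≤ (cnt ω i : ℝ)} + multiPr k h p {ω | (cnt ω i₁ : ℝ) ≤ T} :=
            multiPr_union_le p hp0 _ _
        _ ≤ 1 / (n:ℝ)^2 + 1 / (n:ℝ)^2 := add_le_add (tailA i hple) tailB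
        _ = 2 / (n:ℝ)^2 := by ring
    calc ∑ i ∈ Finset.univ.filter (fun i => ¬ (p i₁ / 2 < p i)), winPr k h p i
        ≤ ∑ _i ∈ Finset.univ.filter (fun i => ¬ (p i₁ / 2 < p i)), 2 / (n:ℝ)^2 :=
          Finset.sum_le_sum hterm
      _ = ((Finset.univ.filter (fun i => ¬ (p i₁ / 2 < p i))).card : ℝ) * (2 / (n:ℝ)^2) := by
          rw [Finset.sum_const, nsmul_eq_mul]
      _ ≤ (n : ℝ) * (2 / (n:ℝ)^2) := by
          refine mul_le_mul_of_nonneg_right ?_ (by positivity)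
          have h1 : (Finset.univ.filter (fun i => ¬ (p i₁ / 2 < p i))).card ≤ k :=
            le_trans (Finset.card_filter_le _ _) (by simp)
          have h2 : ((Finset.univ.filter (fun i => ¬ (p i₁ / 2 < p i))).card : ℝ) ≤ (k:ℝ) := by
            exact_mod_cast h1
          have h3 : (k:ℝ) ≤ (n:ℝ) := by exact_mod_cast hkn
          linarith
      _ = 2 / (n:ℝ) := by field_simp
  have hW0 : 0 ≤ winPr k h p i₁ := winPr_nonneg p hp0 i₁
  have h2n : 2 / (n:ℝ) ≤ 1/3 := by
    rw [div_le_iff₀ hn0]; linarith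
  have h1 : 2/3 ≤ (S.card : ℝ) * winPr k h p i₁ := by linarith
  have hcard2 : (S.card : ℝ) * p i₁ ≤ 2 := by linarith
  have hScard0 : (0:ℝ) ≤ (S.card : ℝ) := Nat.cast_nonneg _
  nlinarith [mul_le_mul_of_nonneg_right hcard2 hW0,
    mul_le_mul_of_nonneg_right h1 hp1pos.le]
end
end

section
/- There exists a natural number n0 such that for all integers n ≥ n0 with k ≤ n the following holds: if p_1 ≥ p_2 ≥ … ≥ p_k and h·p_1 > 324·log n, then Pr(W_{1,strict}) ≥ (1/6)·Pr(W_{1,ties}) and (1/6)·Pr(W_{1,ties}) ≥ (1/18)·p_1; in particular Pr(W_{1,strict}) ≥ p_1/18. -/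
set_option maxHeartbeats 1600000


open scoped BigOperators

noncomputable section

open Finset

section basics
variable {k h : ℕ} (p : Fin k → ℝ)

lemma multiPr_eq_sum_filter (A : Set (Fin h → Fin k)) [DecidablePred (· ∈ A)] :
    multiPr k h p A = ∑ ω ∈ univ.filter (· ∈ A), ∏ j, p (ω j) := by
  rw [multiPr, Finset.sum_filter]
  refine Finset.sum_congr rfl fun ω _ => ?_
  by_cases hω : ω ∈ A <;> simp [hω, Set.indicator_of_mem, Set.indicator_of_notMem]

lemma sum_weights (hsum : ∑ i, p i = 1) :
    ∑ ω : Fin h → Fin k, ∏ j, p (ω j) = 1 := by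
  classical
  have := Finset.prod_univ_sum (fun _ : Fin h => (univ : Finset (Fin k))) (fun _ j => p j)
  rw [Fintype.piFinset_univ] at this
  rw [← this]
  simp [hsum]

lemma weight_nonneg (hp : ∀ i, 0 ≤ p i) (ω : Fin h → Fin k) : 0 ≤ ∏ j, p (ω j) :=
  Finset.prod_nonneg fun _ _ => hp _

lemma prod_pow_cnt (ω : Fin h → Fin k) : ∏ t, p (ω t) = ∏ i, p i ^ cnt ω i := by
  classical
  rw [← Finset.prod_fiberwise_of_maps_to (fun t _ => Finset.mem_univ (ω t)) (fun t => p (ω t))]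
  refine Finset.prod_congr rfl fun i _ => ?_
  rw [cnt, ← Finset.prod_const]
  exact Finset.prod_congr rfl fun t ht => by rw [(Finset.mem_filter.1 ht).2]

lemma cnt_comp (σ : Equiv.Perm (Fin k)) (ω : Fin h → Fin k) (i : Fin k) :
    cnt (fun t => σ (ω t)) i = cnt ω (σ.symm i) := by
  unfold cnt
  congr 1
  ext t
  simp [Equiv.eq_symm_apply, eq_comm]

lemma swap_weight {i1 j : Fin k} (hij : i1 ≠ j) (hp : ∀ i, 0 ≤ p i) (hle : p j ≤ p i1)
    (ω : Fin h → Fin k) (hc : cnt ω i1 < cnt ω j) :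
    p i1 * ∏ t, p (ω t) ≤ p j * ∏ t, p ((Equiv.swap i1 j) (ω t)) := by
  classical
  set σ := Equiv.swap i1 j with hσ
  have h1 : ∏ t, p (σ (ω t)) = ∏ i, p (σ i) ^ cnt ω i := by
    rw [prod_pow_cnt]
    rw [← Equiv.prod_comp σ (fun i => p i ^ cnt (fun t => σ (ω t)) i)]
    refine Finset.prod_congr rfl fun i _ => ?_
    rw [cnt_comp, Equiv.symm_apply_apply]
  rw [h1, prod_pow_cnt]
  set c := cnt ω with hc'
  have hsplit : ∀ f : Fin k → ℝ,
      ∏ i, f i = (∏ i ∈ univ \ {i1, j}, f i) * (f i1 * f j) := by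
    intro f
    rw [← Finset.prod_pair hij, Finset.prod_sdiff (Finset.subset_univ _)]
  rw [hsplit (fun i => p i ^ c i), hsplit (fun i => p (σ i) ^ c i)]
  have hR : ∀ i ∈ univ \ ({i1, j} : Finset (Fin k)), p (σ i) ^ c i = p i ^ c i := by
    intro i hi
    simp only [Finset.mem_sdiff, Finset.mem_insert, Finset.mem_singleton] at hi
    rw [hσ, Equiv.swap_apply_of_ne_of_ne (by tauto) (by tauto)]
  rw [Finset.prod_congr rfl hR]
  set R := ∏ i ∈ univ \ ({i1, j} : Finset (Fin k)), p i ^ c i with hRdef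
  have hRnn : 0 ≤ R := Finset.prod_nonneg fun _ _ => pow_nonneg (hp _) _
  have hσ1 : σ i1 = j := Equiv.swap_apply_left _ _
  have hσ2 : σ j = i1 := Equiv.swap_apply_right _ _
  rw [hσ1, hσ2]
  -- goal : p i1 * (R * (p i1 ^ c i1 * p j ^ c j)) ≤ p j * (R * (p j ^ c i1 * p i1 ^ c j))
  obtain ⟨d, hd⟩ : ∃ d, c j = (c i1 + 1) + d := ⟨c j - (c i1 + 1), by omega⟩
  have key : p i1 * (p i1 ^ c i1 * p j ^ c j) ≤ p j * (p j ^ c i1 * p i1 ^ c j) := by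
    rw [hd]
    have e1 : p i1 * (p i1 ^ c i1 * p j ^ (c i1 + 1 + d))
        = (p i1 ^ (c i1 + 1) * p j ^ (c i1 + 1)) * p j ^ d := by ring
    have e2 : p j * (p j ^ c i1 * p i1 ^ (c i1 + 1 + d))
        = (p i1 ^ (c i1 + 1) * p j ^ (c i1 + 1)) * p i1 ^ d := by ring
    rw [e1, e2]
    exact mul_le_mul_of_nonneg_left (pow_le_pow_left₀ (hp _) hle d)
      (mul_nonneg (pow_nonneg (hp _) _) (pow_nonneg (hp _) _))
  calc p i1 * (R * (p i1 ^ c i1 * p j ^ c j))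
      = R * (p i1 * (p i1 ^ c i1 * p j ^ c j)) := by ring
    _ ≤ R * (p j * (p j ^ c i1 * p i1 ^ c j)) := mul_le_mul_of_nonneg_left key hRnn
    _ = p j * (R * (p j ^ c i1 * p i1 ^ c j)) := by ring

lemma ties_ge_p1 (hk : 2 ≤ k) (hh : 1 ≤ h) (hp : ∀ i, 0 ≤ p i) (hsum : ∑ i, p i = 1)
    (hmono : ∀ i j : Fin k, i ≤ j → p j ≤ p i) :
    p (o₁ k hk) ≤ multiPr k h p (Wties k h (o₁ k hk)) := by
  classical
  set i1 := o₁ k hk with hi1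
  set w : (Fin h → Fin k) → ℝ := fun ω => ∏ t, p (ω t) with hw
  set W : Finset (Fin h → Fin k) := univ.filter (· ∈ Wties k h i1) with hW
  have hPr : multiPr k h p (Wties k h i1) = ∑ ω ∈ W, w ω := multiPr_eq_sum_filter p _
  have hple : ∀ j : Fin k, p j ≤ p i1 := fun j => hmono i1 j (by
    rw [Fin.le_def]
    exact Nat.zero_le _)
  -- complement sum
  have hcompl : ∑ ω ∈ univ.filter (· ∉ Wties k h i1), w ω = 1 - ∑ ω ∈ W, w ω := by
    have := Finset.sum_filter_add_sum_filter_not univ (· ∈ Wties k h i1) w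
    rw [sum_weights p hsum] at this
    linarith
  -- per-j bound
  have key : ∀ j ∈ univ.erase i1,
      ∑ ω ∈ univ.filter (fun ω => ω ∈ Wties k h j ∧ cnt ω i1 < cnt ω j), p i1 * w ω
        ≤ p j * ∑ ω ∈ W, w ω := by
    intro j hj
    have hij : i1 ≠ j := (Finset.ne_of_mem_erase hj).symm
    set σ := Equiv.swap i1 j with hσ
    set g : (Fin h → Fin k) → (Fin h → Fin k) := fun ω t => σ (ω t) with hg
    have hginj : Function.Injective g := fun a b hab => by
      funext t
      have := congrFun hab t
      exact σ.injective this
    set Ej := univ.filter (fun ω => ω ∈ Wties k h j ∧ cnt ω i1 < cnt ω j) with hEj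
    have step1 : ∑ ω ∈ Ej, p i1 * w ω ≤ ∑ ω ∈ Ej, p j * w (g ω) := by
      refine Finset.sum_le_sum fun ω hω => ?_
      obtain ⟨-, hmem⟩ := Finset.mem_filter.1 hω
      exact swap_weight p hij hp (hple j) ω hmem.2
    have step2 : ∑ ω ∈ Ej, p j * w (g ω) = ∑ ω' ∈ Ej.image g, p j * w ω' :=
      (Finset.sum_image (f := fun ω' => p j * w ω') fun a _ b _ hab => hginj hab).symm
    have step3 : Ej.image g ⊆ W := by
      intro ω' hω'
      obtain ⟨ω, hω, rfl⟩ := Finset.mem_image.1 hω'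
      obtain ⟨hWj, hlt⟩ := (Finset.mem_filter.1 hω).2
      refine Finset.mem_filter.2 ⟨Finset.mem_univ _, ?_⟩
      intro i hi
      have hcnt : ∀ i, cnt (g ω) i = cnt ω (σ.symm i) := fun i => cnt_comp σ ω i
      have hg1 : cnt (g ω) i1 = cnt ω j := by
        rw [hcnt, hσ, Equiv.symm_swap, Equiv.swap_apply_left]
      rw [hg1, hcnt]
      by_cases hij' : i = j
      · subst hij'
        rw [hσ, Equiv.symm_swap, Equiv.swap_apply_right]
        exact le_of_lt hlt
      · rw [hσ, Equiv.symm_swap, Equiv.swap_apply_of_ne_of_ne hi hij']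
        exact hWj i hij'
    have step4 : ∑ ω' ∈ Ej.image g, p j * w ω' ≤ ∑ ω' ∈ W, p j * w ω' := by
      refine Finset.sum_le_sum_of_subset_of_nonneg step3 fun ω' _ _ =>
        mul_nonneg (hp _) (weight_nonneg p hp ω')
    calc ∑ ω ∈ Ej, p i1 * w ω ≤ ∑ ω' ∈ Ej.image g, p j * w ω' := step1.trans_eq step2
      _ ≤ ∑ ω' ∈ W, p j * w ω' := step4
      _ = p j * ∑ ω ∈ W, w ω := by rw [Finset.mul_sum]
  -- union bound
  have hexists : ∀ ω, ω ∉ Wties k h i1 →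
      ∃ j ∈ univ.erase i1, ω ∈ Wties k h j ∧ cnt ω i1 < cnt ω j := by
    intro ω hω
    simp only [Wties, Set.mem_setOf_eq, not_forall] at hω
    obtain ⟨j', hj'ne, hj'⟩ := hω
    obtain ⟨j0, -, hj0⟩ := Finset.exists_max_image univ (cnt ω) ⟨i1, Finset.mem_univ _⟩
    have hlt : cnt ω i1 < cnt ω j0 := lt_of_lt_of_le (by omega) (hj0 j' (Finset.mem_univ _))
    have hj0ne : j0 ≠ i1 := fun e => by rw [e] at hlt; omega
    exact ⟨j0, Finset.mem_erase.2 ⟨hj0ne, Finset.mem_univ _⟩,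
      fun i _ => hj0 i (Finset.mem_univ _), hlt⟩
  have union : p i1 * ∑ ω ∈ univ.filter (· ∉ Wties k h i1), w ω
      ≤ ∑ j ∈ univ.erase i1, p j * ∑ ω ∈ W, w ω := by
    rw [Finset.mul_sum]
    calc ∑ ω ∈ univ.filter (· ∉ Wties k h i1), p i1 * w ω
        ≤ ∑ ω ∈ univ.filter (· ∉ Wties k h i1), ∑ j ∈ univ.erase i1,
            (if ω ∈ Wties k h j ∧ cnt ω i1 < cnt ω j then p i1 * w ω else 0) := by
          refine Finset.sum_le_sum fun ω hω => ?_
          obtain ⟨j0, hj0mem, hj0⟩ := hexists ω (Finset.mem_filter.1 hω).2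
          calc p i1 * w ω
              = (if ω ∈ Wties k h j0 ∧ cnt ω i1 < cnt ω j0 then p i1 * w ω else 0) :=
                (if_pos hj0).symm
            _ ≤ _ := by
                refine Finset.single_le_sum
                  (f := fun j => if ω ∈ Wties k h j ∧ cnt ω i1 < cnt ω j
                    then p i1 * w ω else 0) (fun j _ => ?_) hj0mem
                split
                · exact mul_nonneg (hp _) (weight_nonneg p hp ω)
                · exact le_refl 0
      _ = ∑ j ∈ univ.erase i1, ∑ ω ∈ univ.filter (· ∉ Wties k h i1),
            (if ω ∈ Wties k h j ∧ cnt ω i1 < cnt ω j then p i1 * w ω else 0) :=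
          Finset.sum_comm
      _ ≤ ∑ j ∈ univ.erase i1, p j * ∑ ω ∈ W, w ω := by
          refine Finset.sum_le_sum fun j hj => ?_
          refine le_trans ?_ (key j hj)
          calc ∑ ω ∈ univ.filter (· ∉ Wties k h i1),
                (if ω ∈ Wties k h j ∧ cnt ω i1 < cnt ω j then p i1 * w ω else 0)
              ≤ ∑ ω ∈ univ,
                (if ω ∈ Wties k h j ∧ cnt ω i1 < cnt ω j then p i1 * w ω else 0) := by
                refine Finset.sum_le_sum_of_subset_of_nonneg (Finset.filter_subset _ _)
                  fun ω _ _ => ?_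
                split
                · exact mul_nonneg (hp _) (weight_nonneg p hp ω)
                · exact le_refl 0
            _ = ∑ ω ∈ univ.filter (fun ω => ω ∈ Wties k h j ∧ cnt ω i1 < cnt ω j),
                p i1 * w ω := (Finset.sum_filter _ _).symm
  have hsum_erase : ∑ j ∈ univ.erase i1, p j = 1 - p i1 := by
    have := Finset.add_sum_erase univ p (Finset.mem_univ i1)
    rw [hsum] at this
    linarith
  rw [hcompl] at union
  rw [← Finset.sum_mul, hsum_erase] at union
  have hWnn : 0 ≤ ∑ ω ∈ W, w ω := Finset.sum_nonneg fun ω _ => weight_nonneg p hp ω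
  rw [hPr]
  nlinarith [union]


section decompAll
section decomp
variable {k h : ℕ}

lemma card_compl_le (S : Finset (Fin h)) : Sᶜ.card ≤ h := by
  simpa using Finset.card_le_univ Sᶜ

def Theta (i1 : Fin k) (S : Finset (Fin h)) (v : Fin h → {j : Fin k // j ≠ i1}) :
    Fin h → Fin k := fun t =>
  if ht : t ∈ Sᶜ then
    (v (Fin.castLE (card_compl_le S) ((Sᶜ.orderIsoOfFin rfl).symm ⟨t, ht⟩))).1
  else i1

variable {i1 : Fin k} {S : Finset (Fin h)} {v : Fin h → {j : Fin k // j ≠ i1}}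

lemma Theta_eq_iff (t : Fin h) : Theta i1 S v t = i1 ↔ t ∈ S := by
  unfold Theta
  by_cases ht : t ∈ Sᶜ
  · rw [dif_pos ht]
    simp only [Finset.mem_compl] at ht
    exact ⟨fun hv => absurd hv (v _).2, fun hS => absurd hS ht⟩
  · rw [dif_neg ht]
    simp only [Finset.mem_compl, not_not] at ht
    exact ⟨fun _ => ht, fun _ => rfl⟩

lemma Theta_apply_iso (i : Fin Sᶜ.card) :
    Theta i1 S v ((Sᶜ.orderIsoOfFin rfl) i) = (v (Fin.castLE (card_compl_le S) i)).1 := by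
  unfold Theta
  rw [dif_pos ((Sᶜ.orderIsoOfFin rfl i).2)]
  simp only [Subtype.coe_eta, OrderIso.symm_apply_apply]

/-- The set of positions of opinion 1. -/
def Sw {k h : ℕ} (i1 : Fin k) (ω : Fin h → Fin k) : Finset (Fin h) :=
  Finset.univ.filter fun t => ω t = i1

/-- The induced word of non-1 opinions, padded by `o₂`. -/
def uword (hk : 2 ≤ k) (ω : Fin h → Fin k) : Fin h → {j : Fin k // j ≠ o₁ k hk} :=
  fun i =>
    if hi : i.1 < (Sw (o₁ k hk) ω)ᶜ.card then
      ⟨ω (((Sw (o₁ k hk) ω)ᶜ.orderIsoOfFin rfl) ⟨i.1, hi⟩), by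
        have hmem := (((Sw (o₁ k hk) ω)ᶜ.orderIsoOfFin rfl) ⟨i.1, hi⟩).2
        simp only [Sw, Finset.mem_compl, Finset.mem_filter, Finset.mem_univ, true_and]
          at hmem
        exact hmem⟩
    else ⟨o₂ k hk, by simp [o₁, o₂, Fin.ext_iff]⟩

lemma Theta_eq_char (hk : 2 ≤ k) (ω : Fin h → Fin k) (S : Finset (Fin h))
    (v : Fin h → {j : Fin k // j ≠ o₁ k hk}) :
    Theta (o₁ k hk) S v = ω ↔
      S = Sw (o₁ k hk) ω ∧
        ∀ i : Fin h, i.1 < (Sw (o₁ k hk) ω)ᶜ.card → v i = uword hk ω i := by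
  constructor
  · intro hΘ
    have hS : S = Sw (o₁ k hk) ω := by
      ext t
      rw [Sw, Finset.mem_filter]
      rw [← hΘ]
      exact ⟨fun ht => ⟨Finset.mem_univ _, (Theta_eq_iff t).2 ht⟩,
        fun ht => (Theta_eq_iff t).1 ht.2⟩
    subst hS
    refine ⟨rfl, fun i hi => ?_⟩
    apply Subtype.ext
    have h1 : (v i).1 = ω (((Sw (o₁ k hk) ω)ᶜ.orderIsoOfFin rfl) ⟨i.1, hi⟩) := by
      have h2 := Theta_apply_iso (v := v) (S := Sw (o₁ k hk) ω) ⟨i.1, hi⟩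
      have h3 := congrFun hΘ ((((Sw (o₁ k hk) ω)ᶜ.orderIsoOfFin rfl)) ⟨i.1, hi⟩)
      rw [h2] at h3
      rw [← h3]
      congr 2
    rw [h1, uword, dif_pos hi]
  · rintro ⟨rfl, hpre⟩
    funext t
    by_cases ht : t ∈ (Sw (o₁ k hk) ω)ᶜ
    · rw [Theta, dif_pos ht]
      set i := Fin.castLE (card_compl_le _) (((Sw (o₁ k hk) ω)ᶜ.orderIsoOfFin rfl).symm
        ⟨t, ht⟩) with hidef
      have hilt : i.1 < (Sw (o₁ k hk) ω)ᶜ.card :=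
        ((((Sw (o₁ k hk) ω)ᶜ.orderIsoOfFin rfl).symm ⟨t, ht⟩)).2
      rw [hpre i hilt, uword, dif_pos hilt]
      show ω _ = ω t
      congr 1
      have : (⟨i.1, hilt⟩ : Fin (Sw (o₁ k hk) ω)ᶜ.card)
          = ((Sw (o₁ k hk) ω)ᶜ.orderIsoOfFin rfl).symm ⟨t, ht⟩ := Fin.ext rfl
      rw [this, OrderIso.apply_symm_apply]
    · rw [Theta, dif_neg ht]
      rw [Finset.mem_compl, not_not, Sw, Finset.mem_filter] at ht
      exact ht.2.symm

lemma card_filter_lt {ℓ : ℕ} (hl : ℓ ≤ h) :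
    ((univ : Finset (Fin h)).filter fun i => i.1 < ℓ).card = ℓ := by
  have himg : ((univ : Finset (Fin h)).filter fun i => i.1 < ℓ)
      = (univ : Finset (Fin ℓ)).image (Fin.castLE hl) := by
    ext i
    constructor
    · intro hmem
      obtain ⟨-, hi⟩ := Finset.mem_filter.1 hmem
      exact Finset.mem_image.2 ⟨⟨i.1, hi⟩, Finset.mem_univ _, Fin.ext rfl⟩
    · intro hmem
      obtain ⟨i', -, rfl⟩ := Finset.mem_image.1 hmem
      exact Finset.mem_filter.2 ⟨Finset.mem_univ _, i'.2⟩
  rw [himg, Finset.card_image_of_injective _ (Fin.castLE_injective hl)]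
  exact Finset.card_fin ℓ

section withp
variable (hk : 2 ≤ k) (p : Fin k → ℝ)

/-- Weight of a reservoir word. -/
def Qw (hk : 2 ≤ k) (p : Fin k → ℝ) (v : Fin h → {j : Fin k // j ≠ o₁ k hk}) : ℝ :=
  ∏ i, p (v i).1 / (1 - p (o₁ k hk))

lemma qsum (hp : ∀ i, 0 ≤ p i) (hsum : ∑ i, p i = 1) (hp1 : p (o₁ k hk) < 1) :
    ∑ x : {j : Fin k // j ≠ o₁ k hk}, p x.1 / (1 - p (o₁ k hk)) = 1 := by
  rw [← Finset.sum_div]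
  rw [← Finset.sum_subtype (s := univ.erase (o₁ k hk))
    (fun x => ⟨fun hx => (Finset.mem_erase.1 hx).1,
      fun hx => Finset.mem_erase.2 ⟨hx, Finset.mem_univ _⟩⟩) (fun j => p j)]
  have := Finset.add_sum_erase univ p (Finset.mem_univ (o₁ k hk))
  rw [hsum] at this
  rw [show ∑ j ∈ univ.erase (o₁ k hk), p j = 1 - p (o₁ k hk) by linarith]
  exact div_self (by linarith : (0:ℝ) < 1 - p (o₁ k hk)).ne'

lemma sumQ_prefix (hp : ∀ i, 0 ≤ p i) (hsum : ∑ i, p i = 1) (hp1 : p (o₁ k hk) < 1)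
    (ℓ : ℕ) (u : Fin h → {j : Fin k // j ≠ o₁ k hk}) :
    ∑ v ∈ (univ : Finset (Fin h → {j : Fin k // j ≠ o₁ k hk})).filter
        (fun v => ∀ i : Fin h, i.1 < ℓ → v i = u i), Qw hk p v
      = ∏ i ∈ (univ : Finset (Fin h)).filter (fun i => i.1 < ℓ),
          p (u i).1 / (1 - p (o₁ k hk)) := by
  classical
  set q : {j : Fin k // j ≠ o₁ k hk} → ℝ := fun x => p x.1 / (1 - p (o₁ k hk)) with hq
  set g : Fin h → {j : Fin k // j ≠ o₁ k hk} → ℝ :=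
    fun i x => if i.1 < ℓ then (if x = u i then q x else 0) else q x with hg
  have step1 : ∑ v ∈ (univ : Finset (Fin h → {j : Fin k // j ≠ o₁ k hk})).filter
      (fun v => ∀ i : Fin h, i.1 < ℓ → v i = u i), Qw hk p v
      = ∑ v : Fin h → {j : Fin k // j ≠ o₁ k hk}, ∏ i, g i (v i) := by
    rw [Finset.sum_filter]
    refine Finset.sum_congr rfl fun v _ => ?_
    by_cases hv : ∀ i : Fin h, i.1 < ℓ → v i = u i
    · rw [if_pos hv, Qw]
      refine Finset.prod_congr rfl fun i _ => ?_
      rw [hg]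
      by_cases hi : i.1 < ℓ
      · simp only [if_pos hi, if_pos (hv i hi), hq]
      · simp only [if_neg hi, hq]
    · rw [if_neg hv]
      push_neg at hv
      obtain ⟨i0, hi0, hne⟩ := hv
      refine (Finset.prod_eq_zero (Finset.mem_univ i0) ?_).symm
      rw [hg]
      simp only [if_pos hi0, if_neg hne]
  rw [step1]
  have step2 : ∑ v : Fin h → {j : Fin k // j ≠ o₁ k hk}, ∏ i, g i (v i)
      = ∏ i : Fin h, ∑ x : {j : Fin k // j ≠ o₁ k hk}, g i x := by
    have := Finset.prod_univ_sum (fun _ : Fin h =>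
      (univ : Finset {j : Fin k // j ≠ o₁ k hk})) g
    rw [Fintype.piFinset_univ] at this
    exact this.symm
  rw [step2]
  have step3 : ∀ i : Fin h, ∑ x : {j : Fin k // j ≠ o₁ k hk}, g i x
      = if i.1 < ℓ then q (u i) else 1 := by
    intro i
    rw [hg]
    by_cases hi : i.1 < ℓ
    · simp only [if_pos hi]
      rw [Finset.sum_ite_eq' univ (u i) q]
      simp
    · simp only [if_neg hi]
      exact qsum hk p hp hsum hp1
  rw [Finset.prod_congr rfl fun i _ => step3 i]
  rw [← Finset.prod_filter_mul_prod_filter_not univ (fun i : Fin h => i.1 < ℓ)]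
  rw [Finset.prod_congr rfl (fun i hi => if_pos (Finset.mem_filter.1 hi).2),
    Finset.prod_congr rfl (fun i hi => if_neg (Finset.mem_filter.1 hi).2)]
  rw [Finset.prod_const_one, mul_one]

end withp

lemma cnt_Theta_one : cnt (Theta i1 S v) i1 = S.card := by
  unfold cnt
  congr 1
  ext t
  simp [Theta_eq_iff]

/-- Number of occurrences of opinion `j` among the first `ℓ` entries of `v`. -/
def prefCnt (i1 : Fin k) (v : Fin h → {j : Fin k // j ≠ i1}) (ℓ : ℕ) (j : Fin k) : ℕ :=
  (Finset.univ.filter fun i : Fin h => i.1 < ℓ ∧ (v i).1 = j).card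

lemma cnt_Theta_ne {j : Fin k} (hj : j ≠ i1) :
    cnt (Theta i1 S v) j = prefCnt i1 v Sᶜ.card j := by
  unfold cnt prefCnt
  refine Finset.card_bij
    (fun t ht => Fin.castLE (card_compl_le S)
      ((Sᶜ.orderIsoOfFin rfl).symm ⟨t, ?_⟩)) ?_ ?_ ?_
  · -- t ∈ Sᶜ
    have hth := (Finset.mem_filter.1 ht).2
    rw [Finset.mem_compl]
    intro hS
    have : Theta i1 S v t = i1 := (Theta_eq_iff t).2 hS
    exact hj (hth.symm.trans this)
  · intro t ht
    have hth := (Finset.mem_filter.1 ht).2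
    refine Finset.mem_filter.2 ⟨Finset.mem_univ _, ?_, ?_⟩
    · exact ((Sᶜ.orderIsoOfFin rfl).symm ⟨t, _⟩).2
    · rw [← Theta_apply_iso ((Sᶜ.orderIsoOfFin rfl).symm ⟨t, _⟩)]
      rw [OrderIso.apply_symm_apply]
      exact hth
  · intro a ha b hb hab
    have h1 := Fin.castLE_injective (card_compl_le S) hab
    have h2 := (Sᶜ.orderIsoOfFin rfl).symm.injective h1
    exact congrArg Subtype.val h2
  · intro b hb
    obtain ⟨-, hbl, hbv⟩ := Finset.mem_filter.1 hb
    refine ⟨((Sᶜ.orderIsoOfFin rfl) ⟨b.1, hbl⟩ : Fin h), ?_, ?_⟩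
    · refine Finset.mem_filter.2 ⟨Finset.mem_univ _, ?_⟩
      rw [show ((Sᶜ.orderIsoOfFin rfl) ⟨b.1, hbl⟩ : Fin h)
          = ((Sᶜ.orderIsoOfFin rfl) ⟨b.1, hbl⟩ : {x // x ∈ Sᶜ}).1 from rfl]
      rw [Theta_apply_iso ⟨b.1, hbl⟩]
      rw [show Fin.castLE (card_compl_le S) ⟨b.1, hbl⟩ = b from Fin.ext rfl]
      exact hbv
    · simp only [Subtype.coe_eta, OrderIso.symm_apply_apply]
      exact Fin.ext rfl

end decomp

lemma filter_lt_eq_image {ℓ : ℕ} (hl : ℓ ≤ h) :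
    ((univ : Finset (Fin h)).filter fun i => i.1 < ℓ)
      = (univ : Finset (Fin ℓ)).image (Fin.castLE hl) := by
  ext i
  constructor
  · intro hmem
    obtain ⟨-, hi⟩ := Finset.mem_filter.1 hmem
    exact Finset.mem_image.2 ⟨⟨i.1, hi⟩, Finset.mem_univ _, Fin.ext rfl⟩
  · intro hmem
    obtain ⟨i', -, rfl⟩ := Finset.mem_image.1 hmem
    exact Finset.mem_filter.2 ⟨Finset.mem_univ _, i'.2⟩

lemma weight_split (hk : 2 ≤ k) (p : Fin k → ℝ) (ω : Fin h → Fin k) :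
    ∏ t, p (ω t) = p (o₁ k hk) ^ (Sw (o₁ k hk) ω).card *
      ∏ i ∈ (univ : Finset (Fin h)).filter
          (fun i => i.1 < (Sw (o₁ k hk) ω)ᶜ.card),
        p (uword hk ω i).1 := by
  classical
  rw [← Finset.prod_mul_prod_compl (Sw (o₁ k hk) ω) (fun t => p (ω t))]
  congr 1
  · have e0 : ∏ t ∈ Sw (o₁ k hk) ω, p (ω t) = ∏ t ∈ Sw (o₁ k hk) ω, p (o₁ k hk) :=
      Finset.prod_congr rfl fun t ht => by
        rw [(Finset.mem_filter.1 ht).2]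
    rw [e0, Finset.prod_const]
  · have hcl : (Sw (o₁ k hk) ω)ᶜ.card ≤ h := card_compl_le _
    have hiso : ∀ i : Fin (Sw (o₁ k hk) ω)ᶜ.card,
        (uword hk ω (Fin.castLE hcl i)).1
        = ω (((Sw (o₁ k hk) ω)ᶜ.orderIsoOfFin rfl) i) := by
      intro i
      have hlt : (Fin.castLE hcl i).1 < (Sw (o₁ k hk) ω)ᶜ.card := i.2
      rw [uword, dif_pos hlt]
      exact congrArg (fun z => ω (((Sw (o₁ k hk) ω)ᶜ.orderIsoOfFin rfl) z))
        (Fin.ext rfl)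
    calc ∏ t ∈ (Sw (o₁ k hk) ω)ᶜ, p (ω t)
        = ∏ x : ((Sw (o₁ k hk) ω)ᶜ : Finset (Fin h)), p (ω x.1) :=
          (Finset.prod_coe_sort ((Sw (o₁ k hk) ω)ᶜ) (fun t => p (ω t))).symm
      _ = ∏ i : Fin (Sw (o₁ k hk) ω)ᶜ.card,
            p (ω (((Sw (o₁ k hk) ω)ᶜ.orderIsoOfFin rfl) i)) :=
          (Equiv.prod_comp ((Sw (o₁ k hk) ω)ᶜ.orderIsoOfFin rfl).toEquiv
            (fun x : ((Sw (o₁ k hk) ω)ᶜ : Finset (Fin h)) => p (ω x.1))).symm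
      _ = ∏ i : Fin (Sw (o₁ k hk) ω)ᶜ.card, p (uword hk ω (Fin.castLE hcl i)).1 :=
          Finset.prod_congr rfl fun i _ => by rw [hiso i]
      _ = ∏ i ∈ (univ : Finset (Fin (Sw (o₁ k hk) ω)ᶜ.card)).image (Fin.castLE hcl),
            p (uword hk ω i).1 :=
          (Finset.prod_image (f := fun i => p (uword hk ω i).1)
            (fun a _ b _ hab => Fin.castLE_injective hcl hab)).symm
      _ = ∏ i ∈ (univ : Finset (Fin h)).filter
            (fun i => i.1 < (Sw (o₁ k hk) ω)ᶜ.card), p (uword hk ω i).1 := by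
          rw [filter_lt_eq_image hcl]

lemma pow_mul_prod_div {α : Type*} (s : Finset α) (c : ℝ) (hc : c ≠ 0) (f : α → ℝ) :
    c ^ s.card * ∏ i ∈ s, f i / c = ∏ i ∈ s, f i := by
  rw [← Finset.prod_const, ← Finset.prod_mul_distrib]
  exact Finset.prod_congr rfl fun i _ => by field_simp

lemma fiber_sum (hk : 2 ≤ k) (p : Fin k → ℝ) (hp : ∀ i, 0 ≤ p i)
    (hsum : ∑ i, p i = 1) (hp1 : p (o₁ k hk) < 1) (ω : Fin h → Fin k) :
    ∑ x ∈ ((univ : Finset (Fin h)).powerset ×ˢ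
        (univ : Finset (Fin h → {j : Fin k // j ≠ o₁ k hk}))).filter
        (fun x => Theta (o₁ k hk) x.1 x.2 = ω),
      p (o₁ k hk) ^ x.1.card * (1 - p (o₁ k hk)) ^ (h - x.1.card) * Qw hk p x.2
    = ∏ t, p (ω t) := by
  classical
  have hfib : ((univ : Finset (Fin h)).powerset ×ˢ
      (univ : Finset (Fin h → {j : Fin k // j ≠ o₁ k hk}))).filter
        (fun x => Theta (o₁ k hk) x.1 x.2 = ω)
      = {Sw (o₁ k hk) ω} ×ˢ
        ((univ : Finset (Fin h → {j : Fin k // j ≠ o₁ k hk})).filter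
          (fun v => ∀ i : Fin h, i.1 < (Sw (o₁ k hk) ω)ᶜ.card → v i = uword hk ω i)) := by
    ext x
    rw [Finset.mem_filter, Finset.mem_product, Finset.mem_product,
      Finset.mem_singleton, Finset.mem_filter]
    constructor
    · rintro ⟨-, hΘ⟩
      obtain ⟨h1, h2⟩ := (Theta_eq_char hk ω x.1 x.2).1 hΘ
      exact ⟨h1, Finset.mem_univ _, h2⟩
    · rintro ⟨h1, -, h2⟩
      exact ⟨⟨Finset.mem_powerset.2 (Finset.subset_univ _), Finset.mem_univ _⟩,
        (Theta_eq_char hk ω x.1 x.2).2 ⟨h1, h2⟩⟩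
  rw [hfib, Finset.sum_product, Finset.sum_singleton]
  dsimp only
  rw [← Finset.mul_sum]
  rw [sumQ_prefix hk p hp hsum hp1 (Sw (o₁ k hk) ω)ᶜ.card (uword hk ω)]
  have hne : (1 - p (o₁ k hk)) ≠ 0 := (by linarith : (0:ℝ) < 1 - p (o₁ k hk)).ne'
  have hcompl : (Sw (o₁ k hk) ω)ᶜ.card = h - (Sw (o₁ k hk) ω).card := by
    rw [Finset.card_compl, Fintype.card_fin]
  have hcard : ((univ : Finset (Fin h)).filter
      fun i => i.1 < (Sw (o₁ k hk) ω)ᶜ.card).card = (Sw (o₁ k hk) ω)ᶜ.card :=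
    card_filter_lt (card_compl_le _)
  rw [weight_split hk p ω, ← hcompl, mul_assoc]
  rw [show (1 - p (o₁ k hk)) ^ (Sw (o₁ k hk) ω)ᶜ.card
      = (1 - p (o₁ k hk)) ^ ((univ : Finset (Fin h)).filter
          (fun i => i.1 < (Sw (o₁ k hk) ω)ᶜ.card)).card from by rw [hcard]]
  rw [pow_mul_prod_div _ _ hne]

lemma decompose (hk : 2 ≤ k) (p : Fin k → ℝ) (hp : ∀ i, 0 ≤ p i)
    (hsum : ∑ i, p i = 1) (hp1 : p (o₁ k hk) < 1)
    (G : (Fin h → Fin k) → ℝ) :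
    ∑ ω : Fin h → Fin k, (∏ t, p (ω t)) * G ω
      = ∑ v : Fin h → {j : Fin k // j ≠ o₁ k hk}, Qw hk p v *
          ∑ S ∈ (univ : Finset (Fin h)).powerset,
            p (o₁ k hk) ^ S.card * (1 - p (o₁ k hk)) ^ (h - S.card)
              * G (Theta (o₁ k hk) S v) := by
  classical
  set i1 := o₁ k hk
  have rhs2 : ∑ v : Fin h → {j : Fin k // j ≠ i1}, Qw hk p v *
      ∑ S ∈ (univ : Finset (Fin h)).powerset,
        p i1 ^ S.card * (1 - p i1) ^ (h - S.card) * G (Theta i1 S v)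
      = ∑ x ∈ ((univ : Finset (Fin h)).powerset ×ˢ
          (univ : Finset (Fin h → {j : Fin k // j ≠ i1}))),
          p i1 ^ x.1.card * (1 - p i1) ^ (h - x.1.card) * Qw hk p x.2
            * G (Theta i1 x.1 x.2) := by
    rw [Finset.sum_product_right]
    refine Finset.sum_congr rfl fun v _ => ?_
    rw [Finset.mul_sum]
    refine Finset.sum_congr rfl fun S _ => by ring
  rw [rhs2]
  rw [← Finset.sum_fiberwise_of_maps_to
    (g := fun x : Finset (Fin h) × (Fin h → {j : Fin k // j ≠ i1}) =>
      Theta i1 x.1 x.2)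
    (fun x _ => Finset.mem_univ (Theta i1 x.1 x.2))]
  refine (Finset.sum_congr rfl fun ω _ => ?_).symm
  have hG : ∀ x ∈ ((univ : Finset (Fin h)).powerset ×ˢ
      (univ : Finset (Fin h → {j : Fin k // j ≠ i1}))).filter
        (fun x => Theta i1 x.1 x.2 = ω),
      p i1 ^ x.1.card * (1 - p i1) ^ (h - x.1.card) * Qw hk p x.2
          * G (Theta i1 x.1 x.2)
        = p i1 ^ x.1.card * (1 - p i1) ^ (h - x.1.card) * Qw hk p x.2 * G ω := by
    intro x hx
    rw [(Finset.mem_filter.1 hx).2]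
  rw [Finset.sum_congr rfl hG, ← Finset.sum_mul]
  rw [fiber_sum hk p hp hsum hp1 ω]
end decompAll
def binom (h : ℕ) (p1 : ℝ) (m : ℕ) : ℝ := (h.choose m : ℝ) * p1 ^ m * (1 - p1) ^ (h - m)
def tailB (h : ℕ) (p1 : ℝ) (a : ℕ) : ℝ := ∑ m ∈ Finset.Icc a h, binom h p1 m

section binomial
variable {h : ℕ} {p1 : ℝ}

lemma binom_nonneg (hp0 : 0 ≤ p1) (hp1 : p1 ≤ 1) (m : ℕ) : 0 ≤ binom h p1 m := by
  unfold binom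
  have : (0:ℝ) ≤ 1 - p1 := by linarith
  positivity

lemma tailB_nonneg (hp0 : 0 ≤ p1) (hp1 : p1 ≤ 1) (a : ℕ) : 0 ≤ tailB h p1 a :=
  Finset.sum_nonneg fun m _ => binom_nonneg hp0 hp1 m

lemma tailB_succ (a : ℕ) (ha : a ≤ h) :
    tailB h p1 a = binom h p1 a + tailB h p1 (a + 1) := by
  unfold tailB
  have : Finset.Icc a h = insert a (Finset.Icc (a+1) h) := by
    ext m
    simp only [Finset.mem_Icc, Finset.mem_insert]
    omega
  rw [this, Finset.sum_insert (by simp)]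

lemma binom_ratio (hp0 : 0 ≤ p1) (hp1 : p1 < 1) (m : ℕ) (hm : m + 1 ≤ h)
    (hgood : (↑(m+1) : ℝ) * (1 - p1) ≤ 4 * ((h:ℝ) - m) * p1) :
    binom h p1 m ≤ 4 * binom h p1 (m+1) := by
  have hid : (↑(m+1) : ℝ) * (1 - p1) * binom h p1 (m+1)
      = ((h:ℝ) - m) * p1 * binom h p1 m := by
    unfold binom
    have h1 : (h.choose (m+1) : ℝ) * (m+1) = (h.choose m : ℝ) * (h - m) := by
      have := Nat.choose_succ_right_eq h m
      have hcast := congrArg (fun x : ℕ => (x : ℝ)) this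
      push_cast at hcast
      rw [hcast]
      congr 1
      rw [Nat.cast_sub (by omega)]
    have h2 : ((h:ℝ) - m) = ((h - m : ℕ) : ℝ) := by
      rw [Nat.cast_sub (by omega)]
    have h3 : h - m = (h - (m+1)) + 1 := by omega
    have h4 : (1 - p1) ^ (h - m) = (1 - p1) ^ (h - (m+1)) * (1 - p1) := by
      rw [h3, pow_succ]
    have h5 : p1 ^ (m+1) = p1 ^ m * p1 := pow_succ p1 m
    rw [h4, h5]
    push_cast
    linear_combination (p1 * p1 ^ m * (1 - p1) * (1 - p1) ^ (h - (m + 1))) * h1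
  have hb1 : 0 ≤ binom h p1 (m+1) := binom_nonneg hp0 (le_of_lt hp1) _
  have hb0 : 0 ≤ binom h p1 m := binom_nonneg hp0 (le_of_lt hp1) _
  have hpos : (0:ℝ) < ((h:ℝ) - m) * p1 := by
    have hl : (0:ℝ) < (↑(m+1) : ℝ) * (1 - p1) := by
      have : (0:ℝ) < 1 - p1 := by linarith
      positivity
    linarith
  have hmul : (((h:ℝ) - m) * p1) * binom h p1 m
      ≤ (((h:ℝ) - m) * p1) * (4 * binom h p1 (m+1)) := by
    nlinarith [mul_le_mul_of_nonneg_right hgood hb1]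
  exact le_of_mul_le_mul_left hmul hpos

lemma tailB_ratio (hp0 : 0 ≤ p1) (hp1 : p1 < 1) (m : ℕ) (hm : m + 1 ≤ h)
    (hgood : (↑(m+1) : ℝ) * (1 - p1) ≤ 4 * ((h:ℝ) - m) * p1) :
    tailB h p1 m ≤ 5 * tailB h p1 (m+1) := by
  have h1 := tailB_succ (h := h) (p1 := p1) m (by omega)
  have h2 : binom h p1 (m+1) ≤ tailB h p1 (m+1) :=
    Finset.single_le_sum (fun i _ => binom_nonneg hp0 (le_of_lt hp1) i)
      (Finset.mem_Icc.2 ⟨le_refl _, hm⟩)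
  have h3 := binom_ratio hp0 hp1 m hm hgood
  linarith

lemma tailB_chernoff (hp0 : 0 ≤ p1) (hp1 : p1 ≤ 1) (a : ℕ) :
    (2:ℝ)^a * tailB h p1 a ≤ (1 + p1)^h := by
  have step1 : (2:ℝ)^a * tailB h p1 a ≤ ∑ m ∈ Finset.Icc a h, (2:ℝ)^m * binom h p1 m := by
    rw [tailB, Finset.mul_sum]
    refine Finset.sum_le_sum fun m hm => ?_
    have hma : a ≤ m := (Finset.mem_Icc.1 hm).1
    exact mul_le_mul_of_nonneg_right
      (pow_le_pow_right₀ (by norm_num) hma) (binom_nonneg hp0 hp1 m)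
  have step2 : ∑ m ∈ Finset.Icc a h, (2:ℝ)^m * binom h p1 m
      ≤ ∑ m ∈ Finset.range (h+1), (2:ℝ)^m * binom h p1 m := by
    refine Finset.sum_le_sum_of_subset_of_nonneg ?_ fun m _ _ => ?_
    · intro m hm
      rw [Finset.mem_range]
      exact Nat.lt_succ_of_le (Finset.mem_Icc.1 hm).2
    · have := binom_nonneg (h := h) hp0 hp1 m
      positivity
  have step3 : ∑ m ∈ Finset.range (h+1), (2:ℝ)^m * binom h p1 m = (2*p1 + (1-p1))^h := by
    rw [add_pow]
    refine Finset.sum_congr rfl fun m hm => ?_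
    unfold binom
    rw [mul_pow]
    ring
  have : (2*p1 + (1-p1)) = 1 + p1 := by ring
  rw [this] at step3
  linarith

end binomial

/-- The per-reservoir core inequality. -/
lemma per_v_ineq (n h : ℕ) (p1 : ℝ) (hn : 2 ≤ n) (hp0 : 0 < p1) (hp1 : p1 < 1)
    (hp1n : 1 / (n:ℝ) ≤ p1) (hμ : 324 * Real.log n < (h:ℝ) * p1)
    (m₀ : ℕ) (hm₀ : 2 * m₀ ≤ h + 1) :
    tailB h p1 m₀ - p1 / 12 ≤ 5 * tailB h p1 (m₀ + 1) := by
  have hlog2l : (0.6931:ℝ) < Real.log 2 := by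
    have := Real.log_two_gt_d9; linarith
  have hlog2u : Real.log 2 < 0.6932 := by
    have := Real.log_two_lt_d9; linarith
  have hlogn : Real.log 2 ≤ Real.log n := by
    refine Real.log_le_log (by norm_num) ?_
    exact_mod_cast hn
  have hμ' : (224:ℝ) ≤ (h:ℝ) * p1 := by nlinarith
  have hhr : (224:ℝ) ≤ (h:ℝ) := by nlinarith
  have hh : 224 ≤ h := by exact_mod_cast hhr
  have hm₀r : 2 * (m₀:ℝ) ≤ (h:ℝ) + 1 := by exact_mod_cast hm₀
  by_cases hgood : (↑(m₀+1) : ℝ) * (1 - p1) ≤ 4 * ((h:ℝ) - m₀) * p1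
  · have h1 := tailB_ratio (le_of_lt hp0) hp1 m₀ (by omega) hgood
    have h2 : 0 < p1 / 12 := by linarith
    linarith
  · push_neg at hgood
    -- p1 < 2/5
    have hple : p1 < 2/5 := by
      by_contra hge
      push_neg at hge
      have : (↑(m₀+1) : ℝ) * (1 - p1) ≤ 4 * ((h:ℝ) - m₀) * p1 := by
        push_cast
        nlinarith [hm₀r, hge, hhr, hp1.le]
      exact absurd this (not_le.2 hgood)
    -- m₀ ≥ 1.5 h p1
    have hm15 : 3 * ((h:ℝ) * p1) ≤ 2 * (m₀:ℝ) := by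
      push_cast at hgood
      nlinarith
    -- Chernoff: tail m₀ ≤ p1/12
    have hcher := tailB_chernoff (h := h) (le_of_lt hp0) (le_of_lt hp1) m₀
    have hexp1 : ((1:ℝ) + p1)^h ≤ Real.exp ((h:ℝ) * p1) := by
      calc ((1:ℝ) + p1)^h ≤ (Real.exp p1)^h := by
            refine pow_le_pow_left₀ (by linarith) ?_ h
            have := Real.add_one_le_exp p1
            linarith
        _ = Real.exp ((h:ℝ) * p1) := by
            rw [← Real.exp_nat_mul]
    have h2pow : (2:ℝ)^m₀ = Real.exp ((m₀:ℝ) * Real.log 2) := by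
      rw [← Real.exp_log (by norm_num : (0:ℝ) < 2), ← Real.exp_nat_mul]
      norm_num
    have hlogp1 : -(Real.log n) ≤ Real.log p1 := by
      rw [← Real.log_inv]
      refine Real.log_le_log (by positivity) ?_
      rw [inv_eq_one_div]
      exact hp1n
    have hlog12 : Real.log 12 ≤ 2.78 := by
      have h16 : Real.log 12 ≤ Real.log 16 := Real.log_le_log (by norm_num) (by norm_num)
      have : Real.log 16 = 4 * Real.log 2 := by
        rw [show (16:ℝ) = 2^4 by norm_num, Real.log_pow]
        norm_num
      linarith
    have hkey : (h:ℝ) * p1 ≤ Real.log (p1/12) + (m₀:ℝ) * Real.log 2 := by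
      rw [Real.log_div (ne_of_gt hp0) (by norm_num)]
      have hln : 0.6931 ≤ Real.log n := by linarith
      have hmlog : (m₀:ℝ) * Real.log 2 ≥ 1.5 * ((h:ℝ) * p1) * 0.6931 := by
        have hm' : 1.5 * ((h:ℝ) * p1) ≤ (m₀:ℝ) := by linarith
        have hhp1 : (0:ℝ) ≤ (h:ℝ) * p1 := by nlinarith
        nlinarith
      have hhp : 324 * Real.log n < (h:ℝ) * p1 := hμ
      nlinarith [hln, hlogp1, hlog12]
    have hfin : tailB h p1 m₀ ≤ p1 / 12 := by
      have hp12 : Real.exp (Real.log (p1/12)) = p1/12 := Real.exp_log (by positivity)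
      have hexp2 : Real.exp ((h:ℝ) * p1)
          ≤ (p1/12) * (2:ℝ)^m₀ := by
        rw [h2pow, ← hp12, ← Real.exp_add]
        exact Real.exp_le_exp.2 hkey
      have h2pos : (0:ℝ) < (2:ℝ)^m₀ := by positivity
      have hfin2 := le_trans hcher (le_trans hexp1 hexp2)
      nlinarith [hfin2, h2pos]
    have := tailB_nonneg (h := h) (le_of_lt hp0) (le_of_lt hp1) (m₀+1)
    linarith


section estep
variable {k h : ℕ}

lemma prefCnt_mono (i1 : Fin k) (v : Fin h → {j : Fin k // j ≠ i1}) {ℓ ℓ' : ℕ}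
    (hll : ℓ ≤ ℓ') (j : Fin k) : prefCnt i1 v ℓ j ≤ prefCnt i1 v ℓ' j := by
  unfold prefCnt
  refine Finset.card_le_card fun i hi => ?_
  obtain ⟨-, h1, h2⟩ := Finset.mem_filter.1 hi
  exact Finset.mem_filter.2 ⟨Finset.mem_univ _, lt_of_lt_of_le h1 hll, h2⟩

lemma prefCnt_le (i1 : Fin k) (v : Fin h → {j : Fin k // j ≠ i1}) {ℓ : ℕ}
    (hl : ℓ ≤ h) (j : Fin k) : prefCnt i1 v ℓ j ≤ ℓ := by
  unfold prefCnt
  calc ((univ : Finset (Fin h)).filter fun i => i.1 < ℓ ∧ (v i).1 = j).card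
      ≤ ((univ : Finset (Fin h)).filter fun i => i.1 < ℓ).card := by
        refine Finset.card_le_card fun i hi => ?_
        obtain ⟨-, h1, -⟩ := Finset.mem_filter.1 hi
        exact Finset.mem_filter.2 ⟨Finset.mem_univ _, h1⟩
    _ = ℓ := card_filter_lt hl

open Classical in
lemma multiPr_eq_sum_ite (p : Fin k → ℝ) (A : Set (Fin h → Fin k)) :
    multiPr k h p A = ∑ ω : Fin h → Fin k, (∏ t, p (ω t)) *
      (if ω ∈ A then (1:ℝ) else 0) := by
  classical
  rw [multiPr]
  refine Finset.sum_congr rfl fun ω _ => ?_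
  by_cases hω : ω ∈ A
  · rw [Set.indicator_of_mem hω, if_pos hω, mul_one]
  · rw [Set.indicator_of_notMem hω, if_neg hω, mul_zero]

lemma sum_thresh (p1 : ℝ) (a : ℕ) :
    ∑ S ∈ (univ : Finset (Fin h)).powerset,
      p1 ^ S.card * (1 - p1) ^ (h - S.card) * (if a ≤ S.card then (1:ℝ) else 0)
    = tailB h p1 a := by
  classical
  have hstep := Finset.sum_powerset (univ : Finset (Fin h))
    (fun S => p1 ^ S.card * (1 - p1) ^ (h - S.card) * (if a ≤ S.card then (1:ℝ) else 0))
  rw [hstep]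
  have hcu : (univ : Finset (Fin h)).card = h := by
    rw [Finset.card_univ, Fintype.card_fin]
  have hper : ∀ j, ∑ S ∈ Finset.powersetCard j (univ : Finset (Fin h)),
      p1 ^ S.card * (1 - p1) ^ (h - S.card) * (if a ≤ S.card then (1:ℝ) else 0)
      = binom h p1 j * (if a ≤ j then (1:ℝ) else 0) := by
    intro j
    have := Finset.sum_powersetCard j (univ : Finset (Fin h))
      (fun m => p1 ^ m * (1 - p1) ^ (h - m) * (if a ≤ m then (1:ℝ) else 0))
    rw [this, hcu, nsmul_eq_mul, binom]
    ring
  rw [Finset.sum_congr (by rw [hcu]) (fun j _ => hper j)]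
  have hfilt : (Finset.range (h+1)).filter (fun m => a ≤ m) = Finset.Icc a h := by
    ext m
    simp only [Finset.mem_filter, Finset.mem_range, Finset.mem_Icc]
    omega
  rw [tailB, ← hfilt, Finset.sum_filter]
  refine Finset.sum_congr rfl fun m _ => ?_
  by_cases hm : a ≤ m
  · rw [if_pos hm, if_pos hm, mul_one]
  · rw [if_neg hm, if_neg hm, mul_zero]

lemma multiPr_le_one (p : Fin k → ℝ) (hp : ∀ i, 0 ≤ p i) (hsum : ∑ i, p i = 1)
    (A : Set (Fin h → Fin k)) : multiPr k h p A ≤ 1 := by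
  classical
  rw [multiPr_eq_sum_filter p A]
  calc ∑ ω ∈ univ.filter (· ∈ A), ∏ j, p (ω j)
      ≤ ∑ ω : Fin h → Fin k, ∏ j, p (ω j) :=
        Finset.sum_le_sum_of_subset_of_nonneg (Finset.filter_subset _ _)
          (fun ω _ _ => weight_nonneg p hp ω)
    _ = 1 := sum_weights p hsum

lemma estep (hk : 2 ≤ k) (p : Fin k → ℝ) (hp : ∀ i, 0 ≤ p i) (hsum : ∑ i, p i = 1)
    (hh : 1 ≤ h) (hp0 : 0 < p (o₁ k hk)) (hp1 : p (o₁ k hk) < 1)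
    (key : ∀ m₀ : ℕ, 2 * m₀ ≤ h + 1 →
      tailB h (p (o₁ k hk)) m₀ - p (o₁ k hk) / 12
        ≤ 5 * tailB h (p (o₁ k hk)) (m₀ + 1)) :
    multiPr k h p (Wties k h (o₁ k hk)) - p (o₁ k hk) / 12
      ≤ 5 * multiPr k h p (Wstrict k h (o₁ k hk)) := by
  classical
  have hex : ∀ v : Fin h → {j : Fin k // j ≠ o₁ k hk},
      ∃ m, ∀ j, j ≠ o₁ k hk → prefCnt (o₁ k hk) v (h - m) j ≤ m := by
    intro v
    refine ⟨h, fun j hj => ?_⟩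
    rw [Nat.sub_self]
    exact le_trans (prefCnt_le _ _ (Nat.zero_le h) j) (Nat.zero_le h)
  set m₀ : (Fin h → {j : Fin k // j ≠ o₁ k hk}) → ℕ := fun v => Nat.find (hex v)
    with hm₀def
  have hm₀spec : ∀ v, ∀ j, j ≠ o₁ k hk →
      prefCnt (o₁ k hk) v (h - m₀ v) j ≤ m₀ v := fun v => Nat.find_spec (hex v)
  have hTT_iff : ∀ v m,
      (∀ j, j ≠ o₁ k hk → prefCnt (o₁ k hk) v (h - m) j ≤ m) ↔ m₀ v ≤ m := by
    intro v m
    constructor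
    · intro hm
      exact Nat.find_min' (hex v) hm
    · intro hle j hj
      calc prefCnt (o₁ k hk) v (h - m) j
          ≤ prefCnt (o₁ k hk) v (h - m₀ v) j :=
            prefCnt_mono _ v (Nat.sub_le_sub_left hle h) j
        _ ≤ m₀ v := hm₀spec v j hj
        _ ≤ m := hle
  have hSS : ∀ v m, m₀ v + 1 ≤ m →
      ∀ j, j ≠ o₁ k hk → prefCnt (o₁ k hk) v (h - m) j < m := by
    intro v m hm j hj
    have h1 : prefCnt (o₁ k hk) v (h - (m-1)) j ≤ m - 1 :=
      (hTT_iff v (m-1)).2 (by omega) j hj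
    have h2 : prefCnt (o₁ k hk) v (h - m) j ≤ prefCnt (o₁ k hk) v (h - (m-1)) j :=
      prefCnt_mono _ v (by omega) j
    omega
  have hm₀le : ∀ v, 2 * m₀ v ≤ h + 1 := by
    intro v
    have hfind : m₀ v ≤ h - h/2 := by
      refine Nat.find_min' (hex v) fun j hj => ?_
      have h1 : h - (h - h/2) = h/2 := by omega
      rw [h1]
      exact le_trans (prefCnt_le _ _ (by omega) j) (by omega)
    omega
  have hcc : ∀ S : Finset (Fin h), Sᶜ.card = h - S.card := by
    intro S
    rw [Finset.card_compl, Fintype.card_fin]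
  -- membership characterizations
  have hmem_t : ∀ (S : Finset (Fin h)) (v : Fin h → {j : Fin k // j ≠ o₁ k hk}),
      (Theta (o₁ k hk) S v ∈ Wties k h (o₁ k hk)) ↔ m₀ v ≤ S.card := by
    intro S v
    rw [← hTT_iff v S.card]
    constructor
    · intro hw j hj
      have := hw j hj
      rwa [cnt_Theta_ne hj, cnt_Theta_one, hcc S] at this
    · intro hw j hj
      rw [cnt_Theta_ne hj, cnt_Theta_one, hcc S]
      exact hw j hj
  have hmem_s : ∀ (S : Finset (Fin h)) (v : Fin h → {j : Fin k // j ≠ o₁ k hk}),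
      (Theta (o₁ k hk) S v ∈ Wstrict k h (o₁ k hk)) ↔
        (∀ j, j ≠ o₁ k hk → prefCnt (o₁ k hk) v (h - S.card) j < S.card) := by
    intro S v
    constructor
    · intro hw j hj
      have := hw j hj
      rwa [cnt_Theta_ne hj, cnt_Theta_one, hcc S] at this
    · intro hw j hj
      rw [cnt_Theta_ne hj, cnt_Theta_one, hcc S]
      exact hw j hj
  -- inner sums
  have hinner_t : ∀ v : Fin h → {j : Fin k // j ≠ o₁ k hk},
      ∑ S ∈ (univ : Finset (Fin h)).powerset,
        p (o₁ k hk) ^ S.card * (1 - p (o₁ k hk)) ^ (h - S.card) *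
          (if Theta (o₁ k hk) S v ∈ Wties k h (o₁ k hk) then (1:ℝ) else 0)
      = tailB h (p (o₁ k hk)) (m₀ v) := by
    intro v
    rw [← sum_thresh (p (o₁ k hk)) (m₀ v)]
    exact Finset.sum_congr rfl fun S _ => by rw [if_congr (hmem_t S v) rfl rfl]
  have hinner_s : ∀ v : Fin h → {j : Fin k // j ≠ o₁ k hk},
      tailB h (p (o₁ k hk)) (m₀ v + 1)
      ≤ ∑ S ∈ (univ : Finset (Fin h)).powerset,
        p (o₁ k hk) ^ S.card * (1 - p (o₁ k hk)) ^ (h - S.card) *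
          (if Theta (o₁ k hk) S v ∈ Wstrict k h (o₁ k hk) then (1:ℝ) else 0) := by
    intro v
    rw [← sum_thresh (p (o₁ k hk)) (m₀ v + 1)]
    refine Finset.sum_le_sum fun S _ => ?_
    have hcoef : (0:ℝ) ≤ p (o₁ k hk) ^ S.card * (1 - p (o₁ k hk)) ^ (h - S.card) := by
      have h1 : (0:ℝ) ≤ p (o₁ k hk) := le_of_lt hp0
      have h2 : (0:ℝ) ≤ 1 - p (o₁ k hk) := by linarith
      positivity
    refine mul_le_mul_of_nonneg_left ?_ hcoef
    by_cases hc : m₀ v + 1 ≤ S.card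
    · rw [if_pos hc, if_pos ((hmem_s S v).2 (hSS v S.card hc))]
    · rw [if_neg hc]
      by_cases hc2 : Theta (o₁ k hk) S v ∈ Wstrict k h (o₁ k hk)
      · rw [if_pos hc2]; norm_num
      · rw [if_neg hc2]
  -- Q facts
  have hQnn : ∀ v : Fin h → {j : Fin k // j ≠ o₁ k hk}, 0 ≤ Qw hk p v := by
    intro v
    refine Finset.prod_nonneg fun i _ => div_nonneg (hp _) (by linarith)
  have hQsum : ∑ v : Fin h → {j : Fin k // j ≠ o₁ k hk}, Qw hk p v = 1 := by
    have h1 := Finset.prod_univ_sum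
      (fun _ : Fin h => (univ : Finset {j : Fin k // j ≠ o₁ k hk}))
      (fun _ x => p x.1 / (1 - p (o₁ k hk)))
    rw [Fintype.piFinset_univ] at h1
    have h2 : ∑ v : Fin h → {j : Fin k // j ≠ o₁ k hk}, Qw hk p v
        = ∏ _i : Fin h, ∑ x : {j : Fin k // j ≠ o₁ k hk},
            p x.1 / (1 - p (o₁ k hk)) := by
      rw [h1]
      rfl
    rw [h2, Finset.prod_congr rfl fun i _ => qsum hk p hp hsum hp1,
      Finset.prod_const_one]
  -- put everything together
  have hd1 := decompose hk p hp hsum hp1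
    (fun ω => if ω ∈ Wties k h (o₁ k hk) then (1:ℝ) else 0)
  have hd2 := decompose hk p hp hsum hp1
    (fun ω => if ω ∈ Wstrict k h (o₁ k hk) then (1:ℝ) else 0)
  rw [multiPr_eq_sum_ite p (Wties k h (o₁ k hk)), hd1,
    multiPr_eq_sum_ite p (Wstrict k h (o₁ k hk)), hd2]
  have e1 : ∑ v : Fin h → {j : Fin k // j ≠ o₁ k hk}, Qw hk p v *
      (∑ S ∈ (univ : Finset (Fin h)).powerset,
        p (o₁ k hk) ^ S.card * (1 - p (o₁ k hk)) ^ (h - S.card) *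
          (if Theta (o₁ k hk) S v ∈ Wties k h (o₁ k hk) then (1:ℝ) else 0))
      = ∑ v : Fin h → {j : Fin k // j ≠ o₁ k hk},
          Qw hk p v * tailB h (p (o₁ k hk)) (m₀ v) :=
    Finset.sum_congr rfl fun v _ => by rw [hinner_t v]
  rw [e1]
  have e2 : ∑ v : Fin h → {j : Fin k // j ≠ o₁ k hk},
      Qw hk p v * tailB h (p (o₁ k hk)) (m₀ v + 1)
      ≤ ∑ v : Fin h → {j : Fin k // j ≠ o₁ k hk}, Qw hk p v *
        (∑ S ∈ (univ : Finset (Fin h)).powerset,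
          p (o₁ k hk) ^ S.card * (1 - p (o₁ k hk)) ^ (h - S.card) *
            (if Theta (o₁ k hk) S v ∈ Wstrict k h (o₁ k hk) then (1:ℝ) else 0)) :=
    Finset.sum_le_sum fun v _ => mul_le_mul_of_nonneg_left (hinner_s v) (hQnn v)
  have e4 : ∑ v : Fin h → {j : Fin k // j ≠ o₁ k hk},
      Qw hk p v * tailB h (p (o₁ k hk)) (m₀ v) - p (o₁ k hk) / 12
      = ∑ v : Fin h → {j : Fin k // j ≠ o₁ k hk},
          Qw hk p v * (tailB h (p (o₁ k hk)) (m₀ v) - p (o₁ k hk) / 12) := by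
    calc ∑ v : Fin h → {j : Fin k // j ≠ o₁ k hk},
        Qw hk p v * tailB h (p (o₁ k hk)) (m₀ v) - p (o₁ k hk) / 12
        = ∑ v : Fin h → {j : Fin k // j ≠ o₁ k hk},
            Qw hk p v * tailB h (p (o₁ k hk)) (m₀ v)
          - (∑ v : Fin h → {j : Fin k // j ≠ o₁ k hk}, Qw hk p v)
              * (p (o₁ k hk) / 12) := by rw [hQsum, one_mul]
      _ = ∑ v : Fin h → {j : Fin k // j ≠ o₁ k hk},
            (Qw hk p v * tailB h (p (o₁ k hk)) (m₀ v)
              - Qw hk p v * (p (o₁ k hk) / 12)) := by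
          rw [Finset.sum_sub_distrib, Finset.sum_mul]
      _ = ∑ v : Fin h → {j : Fin k // j ≠ o₁ k hk},
            Qw hk p v * (tailB h (p (o₁ k hk)) (m₀ v) - p (o₁ k hk) / 12) :=
          Finset.sum_congr rfl fun v _ => (mul_sub _ _ _).symm
  have e3 : ∑ v : Fin h → {j : Fin k // j ≠ o₁ k hk},
        Qw hk p v * tailB h (p (o₁ k hk)) (m₀ v) - p (o₁ k hk) / 12
      ≤ 5 * ∑ v : Fin h → {j : Fin k // j ≠ o₁ k hk},
          Qw hk p v * tailB h (p (o₁ k hk)) (m₀ v + 1) := by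
    rw [e4, Finset.mul_sum]
    refine Finset.sum_le_sum fun v _ => ?_
    calc Qw hk p v * (tailB h (p (o₁ k hk)) (m₀ v) - p (o₁ k hk) / 12)
        ≤ Qw hk p v * (5 * tailB h (p (o₁ k hk)) (m₀ v + 1)) :=
          mul_le_mul_of_nonneg_left (key (m₀ v) (hm₀le v)) (hQnn v)
      _ = 5 * (Qw hk p v * tailB h (p (o₁ k hk)) (m₀ v + 1)) := by ring
  linarith [e3, mul_le_mul_of_nonneg_left e2 (by norm_num : (0:ℝ) ≤ 5)]
end estep

/-- if `p_1 ≥ p_2 ≥ … ≥ p_k`, `k ≤ n` and `h·p_1 > 324·log n`, then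
`Pr(W_{1,strict}) ≥ (1/6)·Pr(W_{1,ties})`, `(1/6)·Pr(W_{1,ties}) ≥ (1/18)·p_1`,
and in particular `Pr(W_{1,strict}) ≥ p_1/18` (for `n` large enough). -/
theorem ties_do_not_matter :
    ∃ n0 : ℕ, ∀ (n k h : ℕ), n0 ≤ n → ∀ (hk : 2 ≤ k), 1 ≤ h → k ≤ n →
      ∀ p : Fin k → ℝ, (∀ i, 0 ≤ p i) → ∑ i, p i = 1 →
        (∀ i j : Fin k, i ≤ j → p j ≤ p i) →
        324 * Real.log n < (h : ℝ) * p (o₁ k hk) →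
        (1 / 6) * multiPr k h p (Wties k h (o₁ k hk)) ≤
            multiPr k h p (Wstrict k h (o₁ k hk)) ∧
          (1 / 18) * p (o₁ k hk) ≤ (1 / 6) * multiPr k h p (Wties k h (o₁ k hk)) ∧
          p (o₁ k hk) / 18 ≤ multiPr k h p (Wstrict k h (o₁ k hk)) := by
  classical
  refine ⟨2, ?_⟩
  intro n k h hn hk hh hkn p hp hsum hmono hcond
  have hn2 : (2:ℝ) ≤ (n:ℝ) := by exact_mod_cast hn
  have hlog2 : (0.6931:ℝ) < Real.log 2 := by
    have := Real.log_two_gt_d9; linarith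
  have hlogn : (0.6931:ℝ) < Real.log n :=
    lt_of_lt_of_le hlog2 (Real.log_le_log (by norm_num) hn2)
  have hhr : (0:ℝ) ≤ (h:ℝ) := Nat.cast_nonneg h
  have hp0 : 0 < p (o₁ k hk) := by
    by_contra h0
    push_neg at h0
    nlinarith [hcond, hlogn, hhr]
  have hties := ties_ge_p1 p hk hh hp hsum hmono
  have htiesle := multiPr_le_one p hp hsum (Wties k h (o₁ k hk))
  by_cases hp1 : p (o₁ k hk) < 1
  · -- main case : p1 < 1
    have hkpos : (0:ℝ) < (k:ℝ) := by
      have : (2:ℝ) ≤ (k:ℝ) := by exact_mod_cast hk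
      linarith
    have hkp : 1 ≤ (k:ℝ) * p (o₁ k hk) := by
      have h1 : ∑ i, p i ≤ ∑ _i : Fin k, p (o₁ k hk) :=
        Finset.sum_le_sum fun i _ => hmono (o₁ k hk) i (by
          rw [Fin.le_def]; exact Nat.zero_le _)
      rw [Finset.sum_const, Finset.card_univ, Fintype.card_fin, nsmul_eq_mul] at h1
      linarith [hsum ▸ h1]
    have hp1n : 1 / (n:ℝ) ≤ p (o₁ k hk) := by
      have hknr : (k:ℝ) ≤ (n:ℝ) := by exact_mod_cast hkn
      have h2 : 1 / (k:ℝ) ≤ p (o₁ k hk) := by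
        rw [div_le_iff₀ hkpos]
        linarith
      calc 1 / (n:ℝ) ≤ 1 / (k:ℝ) :=
            one_div_le_one_div_of_le hkpos hknr
        _ ≤ p (o₁ k hk) := h2
    have key : ∀ m₀ : ℕ, 2 * m₀ ≤ h + 1 →
        tailB h (p (o₁ k hk)) m₀ - p (o₁ k hk) / 12
          ≤ 5 * tailB h (p (o₁ k hk)) (m₀ + 1) :=
      fun m₀ hm₀ => per_v_ineq n h (p (o₁ k hk)) hn hp0 hp1 hp1n hcond m₀ hm₀
    have hstep := estep hk p hp hsum hh hp0 hp1 key
    have g1 : (1/6) * multiPr k h p (Wties k h (o₁ k hk))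
        ≤ multiPr k h p (Wstrict k h (o₁ k hk)) := by linarith
    have g2 : (1/18) * p (o₁ k hk)
        ≤ (1/6) * multiPr k h p (Wties k h (o₁ k hk)) := by linarith
    exact ⟨g1, g2, by linarith⟩
  · -- degenerate case : p1 = 1
    push_neg at hp1
    have hp1e : p (o₁ k hk) = 1 := by
      refine le_antisymm ?_ hp1
      calc p (o₁ k hk) ≤ ∑ i, p i :=
          Finset.single_le_sum (fun i _ => hp i) (Finset.mem_univ _)
        _ = 1 := hsum
    have hconst : (fun _ : Fin h => o₁ k hk) ∈ Wstrict k h (o₁ k hk) := by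
      intro j hj
      show cnt (fun _ : Fin h => o₁ k hk) j < cnt (fun _ : Fin h => o₁ k hk) (o₁ k hk)
      unfold cnt
      have h1 : ((univ : Finset (Fin h)).filter fun _ => o₁ k hk = j) = ∅ := by
        refine Finset.filter_eq_empty_iff.2 fun t _ => fun e => hj e.symm
      have h2 : ((univ : Finset (Fin h)).filter fun _ => o₁ k hk = o₁ k hk)
          = univ := by
        refine Finset.filter_eq_self.2 fun t _ => rfl
      rw [h1, h2, Finset.card_empty, Finset.card_univ, Fintype.card_fin]
      omega
    have hPs : 1 ≤ multiPr k h p (Wstrict k h (o₁ k hk)) := by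
      rw [multiPr_eq_sum_filter p (Wstrict k h (o₁ k hk))]
      have hwconst : ∏ t : Fin h, p ((fun _ : Fin h => o₁ k hk) t) = 1 := by
        simp [hp1e]
      calc (1:ℝ) = ∏ t : Fin h, p ((fun _ : Fin h => o₁ k hk) t) := hwconst.symm
        _ ≤ ∑ ω ∈ univ.filter (· ∈ Wstrict k h (o₁ k hk)), ∏ j, p (ω j) :=
          Finset.single_le_sum (fun ω _ => weight_nonneg p hp ω)
            (Finset.mem_filter.2 ⟨Finset.mem_univ _, hconst⟩)
    refine ⟨by linarith, ?_, by nlinarith⟩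
    rw [hp1e]
    linarith
end basics
end
end
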